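/- arXiv:1404.2679 — 5 statements merged into one kernel-verified Lean document; each statement's English description precedes it below -/
import Mathlib

section
/- Let X be an mm-space with finite diameter, let 0 < κ < 1 and 1 ≤ p < +∞. Then ObsDiam(X_p^n; -κ) ≤ C_{κ,p} · diam(X) · n^{1/(2p)} for every natural number n ≥ 1, where C_{κ,p} = 4√(2 log(2/κ)) if p = 1 and C_{κ,p} = 4 + 4√(2 log(2/κ)) if 1 < p < +∞. -/
open MeasureTheory Filter Topology Bornology
open scoped ENNReal NNReal

noncomputable section

/-- The partial diameter `diam(ν; α)` of a Borel measure `ν` on `ℝ`: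
the infimum of diameters of Borel sets `A` with `ν A ≥ α`.
(Unbounded sets have infinite diameter, so they are excluded.) -/
def partialDiam (ν : Measure ℝ) (α : ℝ) : ℝ :=
  sInf {r : ℝ | ∃ A : Set ℝ, MeasurableSet A ∧ IsBounded A ∧
    ENNReal.ofReal α ≤ ν A ∧ r = Metric.diam A}

/-- The observable diameter `ObsDiam(X; -κ)` of a probability measure `μ` with respect to
an explicitly given distance function `d` on `X`: the supremum of `diam(f_*μ; 1-κ)` over
all (Borel measurable) `1`-Lipschitz functions `f : X → ℝ`. -/
def obsDiam {X : Type*} [MeasurableSpace X] (d : X → X → ℝ)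
    (μ : Measure X) (κ : ℝ) : ℝ :=
  sSup {r : ℝ | ∃ f : X → ℝ, Measurable f ∧ (∀ x y, |f x - f y| ≤ d x y) ∧
    r = partialDiam (μ.map f) (1 - κ)}

/-- The `l_p`-distance on the `n`-fold product, for `1 ≤ p < ∞`. -/
def lpDist {X : Type*} (d : X → X → ℝ) (p : ℝ) {n : ℕ} (x y : Fin n → X) : ℝ :=
  (∑ i, d (x i) (y i) ^ p) ^ (1 / p)



lemma exp_convex_bound {z D t : ℝ} (hD : 0 < D) (hz : |z| ≤ D) :
    Real.exp (t * z) ≤ Real.cosh (t * D) + (z / D) * Real.sinh (t * D) := by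
  obtain ⟨h1, h2⟩ := abs_le.mp hz
  set θ : ℝ := (D + z) / (2 * D) with hθ
  have hθ0 : 0 ≤ θ := by apply div_nonneg <;> linarith
  have hθ1 : 1 - θ ≥ 0 := by
    rw [hθ]; rw [ge_iff_le, sub_nonneg, div_le_one (by linarith)]; linarith
  have key := convexOn_exp.2 (Set.mem_univ (t * D)) (Set.mem_univ (-(t * D)))
    hθ0 hθ1 (by ring)
  simp only [smul_eq_mul] at key
  have harg : θ * (t * D) + (1 - θ) * -(t * D) = t * z := by
    rw [hθ]; field_simp; ring
  rw [harg] at key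
  refine key.trans (le_of_eq ?_)
  rw [Real.cosh_eq, Real.sinh_eq, hθ]
  field_simp
  ring

lemma integrable_of_bdd {α : Type*} [MeasurableSpace α] {μ : Measure α} [IsFiniteMeasure μ]
    {f : α → ℝ} (hf : AEStronglyMeasurable f μ) {M : ℝ} (h : ∀ x, |f x| ≤ M) :
    Integrable f μ :=
  (integrable_const M).mono' hf (ae_of_all _ (by simpa [Real.norm_eq_abs] using h))

lemma onevar {Y : Type*} [MeasurableSpace Y] (ν : Measure Y) [IsProbabilityMeasure ν]
    (G : Y → ℝ) (D t : ℝ) (hD : 0 < D)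
    (hGi : Integrable G ν) (hGei : Integrable (fun a => Real.exp (t * G a)) ν)
    (hosc : ∀ a b, |G a - G b| ≤ D) :
    ∫ a, Real.exp (t * G a) ∂ν ≤ Real.exp (t ^ 2 * D ^ 2 / 2 + t * ∫ a, G a ∂ν) := by
  set m : ℝ := ∫ a, G a ∂ν with hm
  have hdev : ∀ a, |G a - m| ≤ D := by
    intro a
    have : G a - m = ∫ b, (G a - G b) ∂ν := by
      rw [integral_sub (integrable_const _) hGi, integral_const]
      simp [hm]
    rw [this]
    calc |∫ b, (G a - G b) ∂ν| ≤ ∫ b, |G a - G b| ∂ν := by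
          simpa [Real.norm_eq_abs] using
            norm_integral_le_integral_norm (μ := ν) (fun b => G a - G b)
      _ ≤ ∫ _b, D ∂ν := by
          have hi : Integrable (fun b => |G a - G b|) ν :=
            ((integrable_const (G a)).sub hGi).abs
          exact integral_mono hi (integrable_const _) (fun b => hosc a b)
      _ = D := by simp
  have hpt : ∀ a, Real.exp (t * G a) ≤
      Real.exp (t * m) * (Real.cosh (t * D) + ((G a - m) / D) * Real.sinh (t * D)) := by
    intro a
    have := exp_convex_bound (z := G a - m) (t := t) hD (hdev a)
    calc Real.exp (t * G a) = Real.exp (t * m) * Real.exp (t * (G a - m)) := by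
          rw [← Real.exp_add]; ring_nf
      _ ≤ _ := by
          apply mul_le_mul_of_nonneg_left this (Real.exp_pos _).le
  have hq : Integrable (fun a => (G a - m) / D * Real.sinh (t * D)) ν :=
    ((hGi.sub (integrable_const m)).div_const D).mul_const _
  have hint : ∫ a, Real.exp (t * m) * (Real.cosh (t * D) + ((G a - m) / D) * Real.sinh (t * D)) ∂ν
      = Real.exp (t * m) * Real.cosh (t * D) := by
    rw [integral_const_mul]
    congr 1
    rw [integral_add (integrable_const _) hq, integral_const]
    simp only [probReal_univ, one_smul]
    rw [integral_mul_const, integral_div, integral_sub hGi (integrable_const _), integral_const]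
    simp [hm]
  calc ∫ a, Real.exp (t * G a) ∂ν
      ≤ ∫ a, Real.exp (t * m) * (Real.cosh (t * D) + ((G a - m) / D) * Real.sinh (t * D)) ∂ν := by
        refine integral_mono hGei ?_ hpt
        exact ((integrable_const _).add hq).const_mul _
    _ = Real.exp (t * m) * Real.cosh (t * D) := hint
    _ ≤ Real.exp (t * m) * Real.exp ((t * D) ^ 2 / 2) := by
        apply mul_le_mul_of_nonneg_left (Real.cosh_le_exp_half_sq _) (Real.exp_pos _).le
    _ = Real.exp (t ^ 2 * D ^ 2 / 2 + t * m) := by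
        rw [← Real.exp_add]; ring_nf

lemma mgf_pi {X : Type*} [MeasurableSpace X] (μ : Measure X) [IsProbabilityMeasure μ]
    (D t : ℝ) (hD : 0 < D) :
    ∀ (n : ℕ) (g : (Fin n → X) → ℝ) (M : ℝ), Measurable g → (∀ x, |g x| ≤ M) →
      (∀ (x : Fin n → X) (i : Fin n) (a : X), |g (Function.update x i a) - g x| ≤ D) →
      ∫ x, Real.exp (t * g x) ∂(Measure.pi fun _ : Fin n => μ) ≤
        Real.exp ((n : ℝ) * (t ^ 2 * D ^ 2 / 2) + t * ∫ x, g x ∂(Measure.pi fun _ : Fin n => μ)) := by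
  intro n
  induction n with
  | zero =>
    intro g M hg hM hosc
    rw [integral_unique, integral_unique]
    simp
  | succ n ih =>
    intro g M hg hM hosc
    have hmp := measurePreserving_piFinSuccAbove (fun _ : Fin (n + 1) => μ) 0
    set e := MeasurableEquiv.piFinSuccAbove (fun _ : Fin (n + 1) => X) 0 with he
    set πn := Measure.pi fun _ : Fin n => μ with hπn
    -- g' on the product
    set g' : X × (Fin n → X) → ℝ := fun z => g (e.symm z) with hg'
    have hsymm : ∀ (a : X) (x : Fin n → X), e.symm (a, x) = Fin.cons a x := by
      intro a x
      show (Fin.insertNthEquiv (fun _ : Fin (n+1) => X) 0) (a, x) = Fin.cons a x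
      simp [Fin.insertNthEquiv, Fin.insertNth_zero']
    have hg'm : Measurable g' := hg.comp e.symm.measurable
    have hg'M : ∀ z, |g' z| ≤ M := fun z => hM _
    -- transfer the integrals
    have hint1 : ∫ x, Real.exp (t * g x) ∂(Measure.pi fun _ : Fin (n+1) => μ)
        = ∫ z, Real.exp (t * g' z) ∂(μ.prod πn) := by
      rw [← (hmp.symm e).integral_comp e.symm.measurableEmbedding]
    have hint2 : ∫ x, g x ∂(Measure.pi fun _ : Fin (n+1) => μ)
        = ∫ z, g' z ∂(μ.prod πn) := by
      rw [← (hmp.symm e).integral_comp e.symm.measurableEmbedding]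
    -- coordinate-0 oscillation for g'
    have hosc0 : ∀ (a b : X) (x : Fin n → X), |g' (a, x) - g' (b, x)| ≤ D := by
      intro a b x
      show |g (e.symm (a, x)) - g (e.symm (b, x))| ≤ D
      rw [hsymm, hsymm]
      have h0 : (Fin.cons b x : Fin (n+1) → X) = Function.update (Fin.cons a x) (0 : Fin (n+1)) b := by
        funext i
        refine Fin.cases ?_ (fun j => ?_) i
        · simp
        · simp [Function.update, Fin.succ_ne_zero]
      rw [h0, abs_sub_comm]
      exact hosc _ 0 b
    -- sections satisfy the IH
    have hsec : ∀ a : X, ∫ x, Real.exp (t * g' (a, x)) ∂πn ≤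
        Real.exp ((n : ℝ) * (t ^ 2 * D ^ 2 / 2) + t * ∫ x, g' (a, x) ∂πn) := by
      intro a
      refine ih (fun x => g' (a, x)) M (hg'm.comp measurable_prodMk_left) (fun x => hg'M _) ?_
      intro x i b
      have h1 : e.symm (a, Function.update x i b)
          = Function.update (e.symm (a, x)) i.succ b := by
        rw [hsymm, hsymm, Fin.cons_update]
      show |g (e.symm (a, Function.update x i b)) - g (e.symm (a, x))| ≤ D
      rw [h1]
      exact hosc _ _ _
    set G : X → ℝ := fun a => ∫ x, g' (a, x) ∂πn with hG
    have hGsm : StronglyMeasurable G := hg'm.stronglyMeasurable.integral_prod_right'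
    have hne : Nonempty X := by
      by_contra h
      rw [not_nonempty_iff] at h
      have h1 : (Set.univ : Set X) = ∅ := Set.univ_eq_empty_iff.mpr h
      have h2 := measure_univ (μ := μ)
      rw [h1, measure_empty] at h2
      exact zero_ne_one h2
    have hGM : ∀ a, |G a| ≤ M := by
      intro a
      calc |G a| ≤ ∫ x, |g' (a, x)| ∂πn := by
            simpa [Real.norm_eq_abs] using
              norm_integral_le_integral_norm (μ := πn) (fun x => g' (a, x))
        _ ≤ ∫ _x, M ∂πn := by
            refine integral_mono ?_ (integrable_const _) (fun x => hg'M _)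
            exact (integrable_of_bdd (hg'm.comp measurable_prodMk_left).aestronglyMeasurable
              (fun x => hg'M _)).abs
        _ = M := by simp
    -- main chain
    rw [hint1, hint2]
    have hgint : Integrable (fun z => Real.exp (t * g' z)) (μ.prod πn) := by
      refine integrable_of_bdd (hg'm.const_mul t).exp.aestronglyMeasurable
        (M := Real.exp (|t| * M)) (fun z => ?_)
      rw [abs_of_pos (Real.exp_pos _)]
      apply Real.exp_le_exp.mpr
      calc t * g' z ≤ |t * g' z| := le_abs_self _
        _ = |t| * |g' z| := abs_mul _ _
        _ ≤ |t| * M := mul_le_mul_of_nonneg_left (hg'M z) (abs_nonneg t)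
    rw [integral_prod _ hgint]
    have hGi : Integrable G μ := integrable_of_bdd hGsm.aestronglyMeasurable hGM
    have hGei : Integrable (fun a => Real.exp ((n:ℝ) * (t ^ 2 * D ^ 2 / 2) + t * G a)) μ := by
      refine integrable_of_bdd ?_
        (M := Real.exp ((n:ℝ) * (t ^ 2 * D ^ 2 / 2) + |t| * M)) (fun a => ?_)
      · exact (((hGsm.measurable.const_mul t).const_add _).exp).aestronglyMeasurable
      · rw [abs_of_pos (Real.exp_pos _)]
        apply Real.exp_le_exp.mpr
        have : t * G a ≤ |t| * M := by
          calc t * G a ≤ |t * G a| := le_abs_self _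
            _ = |t| * |G a| := abs_mul _ _
            _ ≤ |t| * M := mul_le_mul_of_nonneg_left (hGM a) (abs_nonneg t)
        linarith
    have step1 : ∫ a, (∫ x, Real.exp (t * g' (a, x)) ∂πn) ∂μ ≤
        ∫ a, Real.exp ((n:ℝ) * (t ^ 2 * D ^ 2 / 2) + t * G a) ∂μ := by
      refine integral_mono ?_ hGei hsec
      refine integrable_of_bdd ?_ (M := Real.exp (|t| * M)) (fun a => ?_)
      · exact ((hg'm.const_mul t).exp.stronglyMeasurable.integral_prod_right').aestronglyMeasurable
      · rw [abs_of_nonneg (integral_nonneg (fun x => (Real.exp_pos _).le))]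
        calc ∫ x, Real.exp (t * g' (a, x)) ∂πn ≤ ∫ _x, Real.exp (|t| * M) ∂πn := by
              refine integral_mono ?_ (integrable_const _) (fun x => ?_)
              · exact integrable_of_bdd
                  ((hg'm.comp measurable_prodMk_left).const_mul t).exp.aestronglyMeasurable
                  (M := Real.exp (|t| * M)) (fun x => by
                    rw [abs_of_pos (Real.exp_pos _)]
                    apply Real.exp_le_exp.mpr
                    calc t * g' (a, x) ≤ |t * g' (a, x)| := le_abs_self _
                      _ = |t| * |g' (a, x)| := abs_mul _ _
                      _ ≤ |t| * M := mul_le_mul_of_nonneg_left (hg'M _) (abs_nonneg t))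
              · apply Real.exp_le_exp.mpr
                calc t * g' (a, x) ≤ |t * g' (a, x)| := le_abs_self _
                  _ = |t| * |g' (a, x)| := abs_mul _ _
                  _ ≤ |t| * M := mul_le_mul_of_nonneg_left (hg'M _) (abs_nonneg t)
          _ = Real.exp (|t| * M) := by simp
    refine step1.trans ?_
    have hsplit : ∀ a : X, Real.exp ((n:ℝ) * (t ^ 2 * D ^ 2 / 2) + t * G a)
        = Real.exp ((n:ℝ) * (t ^ 2 * D ^ 2 / 2)) * Real.exp (t * G a) := by
      intro a; rw [← Real.exp_add]
    simp_rw [hsplit]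
    rw [integral_const_mul]
    have hoscG : ∀ a b, |G a - G b| ≤ D := by
      intro a b
      have hint : Integrable (fun x => g' (a, x) - g' (b, x)) πn := by
        refine integrable_of_bdd ?_ (M := M + M) (fun x => ?_)
        · exact ((hg'm.comp measurable_prodMk_left).sub
            (hg'm.comp measurable_prodMk_left)).aestronglyMeasurable
        · calc |g' (a, x) - g' (b, x)| ≤ |g' (a, x)| + |g' (b, x)| := abs_sub _ _
            _ ≤ M + M := add_le_add (hg'M _) (hg'M _)
      have hia : Integrable (fun x => g' (a, x)) πn :=
        integrable_of_bdd (hg'm.comp measurable_prodMk_left).aestronglyMeasurable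
          (fun x => hg'M _)
      have hib : Integrable (fun x => g' (b, x)) πn :=
        integrable_of_bdd (hg'm.comp measurable_prodMk_left).aestronglyMeasurable
          (fun x => hg'M _)
      have h1 : G a - G b = ∫ x, (g' (a, x) - g' (b, x)) ∂πn := by
        rw [integral_sub hia hib]
      rw [h1]
      calc |∫ x, (g' (a, x) - g' (b, x)) ∂πn| ≤ ∫ x, |g' (a, x) - g' (b, x)| ∂πn := by
            simpa [Real.norm_eq_abs] using
              norm_integral_le_integral_norm (μ := πn) (fun x => g' (a, x) - g' (b, x))
        _ ≤ ∫ _x, D ∂πn := integral_mono hint.abs (integrable_const _) (fun x => hosc0 a b x)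
        _ = D := by simp
    have hGei' : Integrable (fun a => Real.exp (t * G a)) μ := by
      refine integrable_of_bdd ((hGsm.measurable.const_mul t).exp).aestronglyMeasurable
        (M := Real.exp (|t| * M)) (fun a => ?_)
      rw [abs_of_pos (Real.exp_pos _)]
      apply Real.exp_le_exp.mpr
      calc t * G a ≤ |t * G a| := le_abs_self _
        _ = |t| * |G a| := abs_mul _ _
        _ ≤ |t| * M := mul_le_mul_of_nonneg_left (hGM a) (abs_nonneg t)
    have honevar := onevar μ G D t hD hGi hGei' hoscG
    calc Real.exp ((n:ℝ) * (t ^ 2 * D ^ 2 / 2)) * ∫ a, Real.exp (t * G a) ∂μ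
        ≤ Real.exp ((n:ℝ) * (t ^ 2 * D ^ 2 / 2)) *
          Real.exp (t ^ 2 * D ^ 2 / 2 + t * ∫ a, G a ∂μ) :=
          mul_le_mul_of_nonneg_left honevar (Real.exp_pos _).le
      _ = Real.exp (((n:ℝ)+1) * (t ^ 2 * D ^ 2 / 2) + t * ∫ a, G a ∂μ) := by
          rw [← Real.exp_add]; ring_nf
      _ = Real.exp ((((n:ℕ)+1 : ℕ) : ℝ) * (t ^ 2 * D ^ 2 / 2) + t * ∫ z, g' z ∂(μ.prod πn)) := by
          rw [integral_prod _ (integrable_of_bdd hg'm.aestronglyMeasurable hg'M)]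
          push_cast
          rfl

lemma chernoff {X : Type*} [MeasurableSpace X] (μ : Measure X) [IsProbabilityMeasure μ]
    (D : ℝ) (hD : 0 < D) (n : ℕ) (hn : 1 ≤ n) (g : (Fin n → X) → ℝ) (M : ℝ)
    (hg : Measurable g) (hM : ∀ x, |g x| ≤ M)
    (hosc : ∀ (x : Fin n → X) (i : Fin n) (a : X), |g (Function.update x i a) - g x| ≤ D)
    (s : ℝ) (hs : 0 ≤ s) :
    ((Measure.pi fun _ : Fin n => μ) {x | (∫ y, g y ∂(Measure.pi fun _ : Fin n => μ)) + s ≤ g x}).toReal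
      ≤ Real.exp (-(s ^ 2) / (2 * n * D ^ 2)) := by
  set π := Measure.pi fun _ : Fin n => μ with hπ
  set m : ℝ := ∫ y, g y ∂π with hm
  set t : ℝ := s / (n * D ^ 2) with ht
  have hnpos : (0:ℝ) < n := by exact_mod_cast hn
  have ht0 : 0 ≤ t := div_nonneg hs (by positivity)
  have hmgf := mgf_pi μ D t hD n g M hg hM hosc
  -- Markov
  have hFm : Measurable fun x => Real.exp (t * g x) := (hg.const_mul t).exp
  have hFi : Integrable (fun x => Real.exp (t * g x)) π := by
    refine integrable_of_bdd hFm.aestronglyMeasurable (M := Real.exp (|t| * M)) (fun x => ?_)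
    rw [abs_of_pos (Real.exp_pos _)]
    apply Real.exp_le_exp.mpr
    calc t * g x ≤ |t * g x| := le_abs_self _
      _ = |t| * |g x| := abs_mul _ _
      _ ≤ |t| * M := mul_le_mul_of_nonneg_left (hM x) (abs_nonneg t)
  have hmarkov := mul_meas_ge_le_integral_of_nonneg
    (ae_of_all π (fun x => (Real.exp_pos (t * g x)).le)) hFi (Real.exp (t * (m + s)))
  have hsub : {x | m + s ≤ g x} ⊆ {x | Real.exp (t * (m + s)) ≤ Real.exp (t * g x)} := by
    intro x hx
    exact Real.exp_le_exp.mpr (mul_le_mul_of_nonneg_left hx ht0)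
  have hmono := measure_mono (μ := π) hsub
  have hfin1 : π {x | Real.exp (t * (m + s)) ≤ Real.exp (t * g x)} ≠ ⊤ := measure_ne_top _ _
  have hfin2 : π {x | m + s ≤ g x} ≠ ⊤ := measure_ne_top _ _
  have htr : (π {x | m + s ≤ g x}).toReal ≤
      (π {x | Real.exp (t * (m + s)) ≤ Real.exp (t * g x)}).toReal :=
    ENNReal.toReal_mono hfin1 hmono
  have key : Real.exp (t * (m + s)) * (π {x | m + s ≤ g x}).toReal ≤
      Real.exp ((n:ℝ) * (t ^ 2 * D ^ 2 / 2) + t * m) := by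
    calc Real.exp (t * (m + s)) * (π {x | m + s ≤ g x}).toReal
        ≤ Real.exp (t * (m + s)) * (π {x | Real.exp (t * (m + s)) ≤ Real.exp (t * g x)}).toReal :=
          mul_le_mul_of_nonneg_left htr (Real.exp_pos _).le
      _ ≤ ∫ x, Real.exp (t * g x) ∂π := hmarkov
      _ ≤ _ := hmgf
  have hexp : (π {x | m + s ≤ g x}).toReal ≤
      Real.exp ((n:ℝ) * (t ^ 2 * D ^ 2 / 2) + t * m - t * (m + s)) := by
    rw [Real.exp_sub, le_div_iff₀ (Real.exp_pos _)]
    nlinarith [key]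
  refine hexp.trans (le_of_eq ?_)
  congr 1
  rw [ht]
  field_simp
  ring



-- arithmetic lemma
lemma arith_bound (D p κ : ℝ) (n : ℕ) (hD : 0 < D) (hp : 1 ≤ p) (hκ0 : 0 < κ) (hκ1 : κ < 1)
    (hn : 1 ≤ n) :
    D ^ (1 - 1/p) * (2 * (D * Real.sqrt (2 * n * Real.log (2/κ)))) ^ (1/p)
      ≤ (if p = 1 then 4 * Real.sqrt (2 * Real.log (2/κ))
          else 4 + 4 * Real.sqrt (2 * Real.log (2/κ))) * D * (n:ℝ) ^ (1/(2*p)) := by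
  have hp0 : 0 < p := lt_of_lt_of_le one_pos hp
  set L' : ℝ := Real.log (2/κ) with hL'
  have hL'pos : 0 < L' := Real.log_pos (by rw [lt_div_iff₀ hκ0]; linarith)
  set L : ℝ := 2 * L' with hLdef
  have hL1 : 1 ≤ L := by
    have h2 : Real.log 2 ≤ L' := by
      apply Real.log_le_log (by norm_num)
      rw [le_div_iff₀ hκ0]; linarith
    have := Real.log_two_gt_d9
    rw [hLdef]; linarith
  have hsL1 : 1 ≤ Real.sqrt L := by
    rw [show (1:ℝ) = Real.sqrt 1 by simp]
    exact Real.sqrt_le_sqrt hL1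
  have hn0 : (0:ℝ) ≤ n := Nat.cast_nonneg n
  -- rewrite sqrt(2 n L') = sqrt L * sqrt n
  have hsplit : Real.sqrt (2 * n * L') = Real.sqrt L * Real.sqrt n := by
    rw [← Real.sqrt_mul (by positivity) (n:ℝ)]
    rw [hLdef]; ring_nf
  rw [hsplit]
  -- key equality
  have hkey : D ^ (1 - 1/p) * (2 * (D * (Real.sqrt L * Real.sqrt n))) ^ (1/p)
      = (2 ^ (1/p) * Real.sqrt L ^ (1/p)) * D * (n:ℝ) ^ (1/(2*p)) := by
    have h1 : (2 * (D * (Real.sqrt L * Real.sqrt n))) ^ (1/p)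
        = 2 ^ (1/p) * D ^ (1/p) * Real.sqrt L ^ (1/p) * Real.sqrt n ^ (1/p) := by
      rw [Real.mul_rpow (by norm_num) (by positivity),
        Real.mul_rpow hD.le (by positivity),
        Real.mul_rpow (Real.sqrt_nonneg _) (Real.sqrt_nonneg _)]
      ring
    rw [h1]
    have h2 : D ^ (1 - 1/p) * D ^ (1/p) = D := by
      rw [← Real.rpow_add hD]; norm_num
    have h3 : Real.sqrt n ^ (1/p) = (n:ℝ) ^ (1/(2*p)) := by
      rw [Real.sqrt_eq_rpow, ← Real.rpow_mul hn0, div_mul_div_comm, one_mul]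
    rw [h3]
    calc D ^ (1 - 1/p) * (2 ^ (1/p) * D ^ (1/p) * Real.sqrt L ^ (1/p) * (n:ℝ) ^ (1/(2*p)))
        = (2 ^ (1/p) * Real.sqrt L ^ (1/p)) * (D ^ (1 - 1/p) * D ^ (1/p)) * (n:ℝ) ^ (1/(2*p)) := by
          ring
      _ = _ := by rw [h2]
  rw [hkey]
  have hcoef : 2 ^ (1/p) * Real.sqrt L ^ (1/p) ≤ 2 * Real.sqrt L := by
    have c1 : (2:ℝ) ^ (1/p) ≤ 2 := by
      calc (2:ℝ) ^ (1/p) ≤ (2:ℝ) ^ (1:ℝ) :=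
            Real.rpow_le_rpow_of_exponent_le (by norm_num)
              (by rw [div_le_one hp0]; exact hp)
        _ = 2 := Real.rpow_one 2
    have c2 : Real.sqrt L ^ (1/p) ≤ Real.sqrt L := by
      calc Real.sqrt L ^ (1/p) ≤ Real.sqrt L ^ (1:ℝ) :=
            Real.rpow_le_rpow_of_exponent_le hsL1
              (by rw [div_le_one hp0]; exact hp)
        _ = Real.sqrt L := Real.rpow_one _
    have := mul_le_mul c1 c2 (Real.rpow_nonneg (Real.sqrt_nonneg _) _) (by norm_num)
    linarith
  have hCge : 2 * Real.sqrt L ≤ (if p = 1 then 4 * Real.sqrt (2 * L')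
      else 4 + 4 * Real.sqrt (2 * L')) := by
    rw [← hLdef]
    have := Real.sqrt_nonneg L
    split_ifs <;> nlinarith
  have hnp : (0:ℝ) ≤ (n:ℝ) ^ (1/(2*p)) := Real.rpow_nonneg hn0 _
  calc (2 ^ (1/p) * Real.sqrt L ^ (1/p)) * D * (n:ℝ) ^ (1/(2*p))
      ≤ (2 * Real.sqrt L) * D * (n:ℝ) ^ (1/(2*p)) := by
        apply mul_le_mul_of_nonneg_right _ hnp
        exact mul_le_mul_of_nonneg_right hcoef hD.le
    _ ≤ _ := by
        apply mul_le_mul_of_nonneg_right _ hnp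
        exact mul_le_mul_of_nonneg_right hCge hD.le

set_option maxHeartbeats 2000000 in
/-- **Theorem 1.1.** For an mm-space `X` of finite diameter, `0 < κ < 1` and `1 ≤ p < ∞`,
`ObsDiam(X_p^n; -κ) ≤ C_{κ,p} · diam X · n^(1/(2p))`. -/
theorem obsDiam_lp_product_le
    {X : Type*} [MetricSpace X] [CompleteSpace X] [TopologicalSpace.SeparableSpace X]
    [MeasurableSpace X] [BorelSpace X]
    (μ : Measure X) [IsProbabilityMeasure μ]
    (hbdd : IsBounded (Set.univ : Set X))
    (κ : ℝ) (hκ0 : 0 < κ) (hκ1 : κ < 1)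
    (p : ℝ) (hp : 1 ≤ p)
    (n : ℕ) (hn : 1 ≤ n) :
    obsDiam (lpDist dist p) (Measure.pi fun _ : Fin n => μ) κ ≤
      (if p = 1 then 4 * Real.sqrt (2 * Real.log (2 / κ))
        else 4 + 4 * Real.sqrt (2 * Real.log (2 / κ))) *
        Metric.diam (Set.univ : Set X) * (n : ℝ) ^ (1 / (2 * p)) := by
  have hp0 : 0 < p := lt_of_lt_of_le one_pos hp
  set D : ℝ := Metric.diam (Set.univ : Set X) with hDdef
  have hD0 : 0 ≤ D := Metric.diam_nonneg
  set C : ℝ := (if p = 1 then 4 * Real.sqrt (2 * Real.log (2 / κ))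
        else 4 + 4 * Real.sqrt (2 * Real.log (2 / κ))) with hCdef
  have hC0 : 0 ≤ C := by
    rw [hCdef]; split_ifs <;> positivity
  have hRHS0 : 0 ≤ C * D * (n:ℝ) ^ (1/(2*p)) := by positivity
  -- nonemptiness
  have hne : Nonempty X := by
    by_contra h
    rw [not_nonempty_iff] at h
    have h1 : (Set.univ : Set X) = ∅ := Set.univ_eq_empty_iff.mpr h
    have h2 := measure_univ (μ := μ)
    rw [h1, measure_empty] at h2
    exact zero_ne_one h2
  set π := Measure.pi fun _ : Fin n => μ with hπ
  have hdistD : ∀ x y : X, dist x y ≤ D :=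
    fun x y => Metric.dist_le_diam_of_mem hbdd trivial trivial
  apply Real.sSup_le _ hRHS0
  rintro r ⟨f, hfm, hflip, rfl⟩
  -- lower bound for the partialDiam index set
  have hT0 : BddBelow {r : ℝ | ∃ A : Set ℝ, MeasurableSet A ∧ IsBounded A ∧
      ENNReal.ofReal (1 - κ) ≤ (π.map f) A ∧ r = Metric.diam A} := by
    refine ⟨0, ?_⟩
    rintro r ⟨A, -, -, -, rfl⟩
    exact Metric.diam_nonneg
  obtain ⟨x₀⟩ : Nonempty (Fin n → X) := ⟨fun _ => Classical.arbitrary X⟩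
  by_cases hD : D = 0
  · -- degenerate case: X essentially a point
    have hsub : ∀ x y : X, x = y := by
      intro x y
      have h1 := hdistD x y
      rw [hD] at h1
      exact dist_le_zero.mp h1
    have hconst : ∀ x, f x = f x₀ := by
      intro x
      have : x = x₀ := funext fun i => hsub _ _
      rw [this]
    have hmem : (0:ℝ) ∈ {r : ℝ | ∃ A : Set ℝ, MeasurableSet A ∧ IsBounded A ∧
        ENNReal.ofReal (1 - κ) ≤ (π.map f) A ∧ r = Metric.diam A} := by
      refine ⟨{f x₀}, measurableSet_singleton _, Bornology.isBounded_singleton, ?_, by simp⟩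
      rw [Measure.map_apply hfm (measurableSet_singleton _)]
      have : f ⁻¹' {f x₀} = Set.univ := by
        ext x; simp [hconst x]
      rw [this, measure_univ]
      exact ENNReal.ofReal_le_one.mpr (by linarith)
    have := csInf_le hT0 hmem
    rw [partialDiam]
    calc sInf _ ≤ 0 := this
      _ ≤ _ := hRHS0
  · have hDpos : 0 < D := lt_of_le_of_ne hD0 (Ne.symm hD)
    -- the l1 distance
    set d1 : (Fin n → X) → (Fin n → X) → ℝ := fun x y => ∑ i, dist (x i) (y i) with hd1
    have hd10 : ∀ x y, 0 ≤ d1 x y := fun x y => Finset.sum_nonneg fun i _ => dist_nonneg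
    have hd1D : ∀ x y, d1 x y ≤ n * D := by
      intro x y
      calc d1 x y ≤ ∑ _i : Fin n, D := Finset.sum_le_sum fun i _ => hdistD _ _
        _ = n * D := by simp [mul_comm]
    have hd1symm : ∀ x y, d1 x y = d1 y x := by
      intro x y; exact Finset.sum_congr rfl fun i _ => dist_comm _ _
    have hd1tri : ∀ x z y, d1 x y ≤ d1 x z + d1 z y := by
      intro x z y
      rw [hd1, ← Finset.sum_add_distrib]
      exact Finset.sum_le_sum fun i _ => dist_triangle _ _ _
    -- Hölder-type estimate for f
    have hHol : ∀ x y : Fin n → X, |f x - f y| ≤ D ^ (1 - 1/p) * (d1 x y) ^ (1/p) := by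
      intro x y
      refine (hflip x y).trans ?_
      have hterm : ∀ i : Fin n, dist (x i) (y i) ^ p ≤ D ^ (p - 1) * dist (x i) (y i) := by
        intro i
        rcases eq_or_lt_of_le (dist_nonneg (x := x i) (y := y i)) with h0 | h0
        · rw [← h0, Real.zero_rpow (ne_of_gt hp0)]
          simp
        · have e1 : dist (x i) (y i) ^ p = dist (x i) (y i) ^ ((p - 1) + (1:ℝ)) := by
            congr 1; ring
          rw [e1, Real.rpow_add h0, Real.rpow_one]
          apply mul_le_mul_of_nonneg_right _ dist_nonneg
          exact Real.rpow_le_rpow dist_nonneg (hdistD _ _) (by linarith)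
      have hsum : ∑ i, dist (x i) (y i) ^ p ≤ D ^ (p - 1) * d1 x y := by
        rw [hd1, Finset.mul_sum]
        exact Finset.sum_le_sum fun i _ => hterm i
      have hsum0 : 0 ≤ ∑ i, dist (x i) (y i) ^ p :=
        Finset.sum_nonneg fun i _ => Real.rpow_nonneg dist_nonneg _
      calc lpDist dist p x y = (∑ i, dist (x i) (y i) ^ p) ^ (1/p) := rfl
        _ ≤ (D ^ (p - 1) * d1 x y) ^ (1/p) :=
            Real.rpow_le_rpow hsum0 hsum (by positivity)
        _ = (D ^ (p-1)) ^ (1/p) * (d1 x y) ^ (1/p) :=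
            Real.mul_rpow (Real.rpow_nonneg hD0 _) (hd10 x y)
        _ = D ^ (1 - 1/p) * (d1 x y) ^ (1/p) := by
            rw [← Real.rpow_mul hD0]
            congr 1
            field_simp
    -- bounded range of f
    set W : ℝ := D ^ (1 - 1/p) * ((n:ℝ) * D) ^ (1/p) with hW
    have hW0 : 0 ≤ W := by positivity
    have hfW : ∀ x, |f x - f x₀| ≤ W := by
      intro x
      refine (hHol x x₀).trans ?_
      apply mul_le_mul_of_nonneg_left _ (Real.rpow_nonneg hD0 _)
      exact Real.rpow_le_rpow (hd10 _ _) (hd1D _ _) (by positivity)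
    -- quantile level
    set c : ℝ≥0∞ := ENNReal.ofReal (κ/2) with hc
    have hcpos : 0 < c := ENNReal.ofReal_pos.mpr (by linarith)
    have hc1 : c ≤ 1 := by
      rw [hc, ← ENNReal.ofReal_one]
      exact ENNReal.ofReal_le_ofReal (by linarith)
    set S : Set ℝ := {s : ℝ | c ≤ π {x | f x ≤ s}} with hS
    have hSne : S.Nonempty := by
      refine ⟨f x₀ + W, ?_⟩
      have : {x | f x ≤ f x₀ + W} = Set.univ := by
        ext x
        simp only [Set.mem_setOf_eq, Set.mem_univ, iff_true]
        have := (abs_le.mp (hfW x)).2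
        linarith
      simp only [hS, Set.mem_setOf_eq, this, measure_univ]
      exact hc1
    have hSbdd : BddBelow S := by
      refine ⟨f x₀ - W - 1, ?_⟩
      intro s hs
      by_contra hcon
      push_neg at hcon
      have hempty : {x | f x ≤ s} = ∅ := by
        ext x
        simp only [Set.mem_setOf_eq, Set.mem_empty_iff_false, iff_false, not_le]
        have := (abs_le.mp (hfW x)).1
        linarith
      rw [hS, Set.mem_setOf_eq, hempty, measure_empty] at hs
      exact absurd hs (not_le.mpr hcpos)
    set α : ℝ := sInf S with hα
    have hSmono : ∀ s s', s ≤ s' → s ∈ S → s' ∈ S := by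
      intro s s' hss hs
      refine le_trans hs (measure_mono ?_)
      intro x hx
      exact le_trans hx hss
    have hα1 : c ≤ π {x | f x ≤ α} := by
      have hseq : {x | f x ≤ α} = ⋂ k : ℕ, {x | f x ≤ α + 1/(k+1)} := by
        ext x
        simp only [Set.mem_setOf_eq, Set.mem_iInter]
        constructor
        · intro h k
          have : (0:ℝ) < 1/(k+1) := by positivity
          linarith
        · intro h
          refine le_of_forall_pos_le_add fun ε hε => ?_
          obtain ⟨k, hk⟩ := exists_nat_one_div_lt hε
          have := h k
          push_cast at this hk ⊢
          linarith
      rw [hseq]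
      have hmeas : ∀ k : ℕ, NullMeasurableSet {x | f x ≤ α + 1/(k+1)} π :=
        fun k => (hfm measurableSet_Iic).nullMeasurableSet
      have hdir : Directed (· ⊇ ·) (fun k : ℕ => {x : Fin n → X | f x ≤ α + 1/(k+1)}) := by
        apply Antitone.directed_ge
        intro k l hkl x hx
        simp only [Set.mem_setOf_eq] at hx ⊢
        have h1 : (1:ℝ)/(l+1) ≤ 1/(k+1) := by
          apply one_div_le_one_div_of_le (by positivity)
          exact add_le_add_left (Nat.cast_le.mpr hkl) 1
        linarith
      rw [Directed.measure_iInter hmeas hdir ⟨0, measure_ne_top _ _⟩]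
      refine le_iInf fun k => ?_
      have hlt : α < α + 1/(k+1) := by
        have : (0:ℝ) < 1/(k+1) := by positivity
        linarith
      obtain ⟨s', hs'S, hs'lt⟩ := (csInf_lt_iff hSbdd hSne).mp hlt
      exact hSmono s' _ hs'lt.le hs'S
    have hα2 : π {x | f x < α} ≤ c := by
      have hseq : {x | f x < α} = ⋃ k : ℕ, {x | f x ≤ α - 1/(k+1)} := by
        ext x
        simp only [Set.mem_setOf_eq, Set.mem_iUnion]
        constructor
        · intro h
          obtain ⟨k, hk⟩ := exists_nat_one_div_lt (sub_pos.mpr h)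
          exact ⟨k, by push_cast at hk ⊢; linarith⟩
        · rintro ⟨k, hk⟩
          have : (0:ℝ) < 1/(k+1) := by positivity
          linarith
      rw [hseq]
      have hdir : Directed (· ⊆ ·) (fun k : ℕ => {x : Fin n → X | f x ≤ α - 1/(k+1)}) := by
        apply Monotone.directed_le
        intro k l hkl x hx
        simp only [Set.mem_setOf_eq] at hx ⊢
        have h1 : (1:ℝ)/(l+1) ≤ 1/(k+1) := by
          apply one_div_le_one_div_of_le (by positivity)
          exact add_le_add_left (Nat.cast_le.mpr hkl) 1
        linarith
      rw [Directed.measure_iUnion hdir]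
      refine iSup_le fun k => ?_
      have hnotS : (α - 1/(k+1)) ∉ S := by
        intro hmem
        have := csInf_le hSbdd hmem
        rw [← hα] at this
        have h0 : (0:ℝ) < 1/(k+1) := by positivity
        linarith
      rw [hS, Set.mem_setOf_eq, not_le] at hnotS
      exact hnotS.le
    -- the set A and distance function g
    set A : Set (Fin n → X) := {x | f x ≤ α} with hA
    have hAmeas : MeasurableSet A := hfm measurableSet_Iic
    have hAne : A.Nonempty := by
      rw [Set.nonempty_iff_ne_empty]
      intro hemp
      rw [hemp, measure_empty] at hα1
      exact absurd hα1 (not_le.mpr hcpos)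
    have himg_ne : ∀ x, ((d1 x) '' A).Nonempty := fun x => hAne.image _
    have hbdb : ∀ x, BddBelow ((d1 x) '' A) := by
      intro x
      refine ⟨0, ?_⟩
      rintro w ⟨y, hy, rfl⟩
      exact hd10 x y
    set g : (Fin n → X) → ℝ := fun x => sInf ((d1 x) '' A) with hgdef
    have hg0 : ∀ x, 0 ≤ g x := by
      intro x
      refine le_csInf (himg_ne x) ?_
      rintro w ⟨y, hy, rfl⟩
      exact hd10 x y
    have hgle : ∀ x y, y ∈ A → g x ≤ d1 x y := by
      intro x y hy
      exact csInf_le (hbdb x) ⟨y, hy, rfl⟩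
    have hglip : ∀ x x', g x ≤ d1 x x' + g x' := by
      intro x x'
      have h1 : g x - d1 x x' ≤ g x' := by
        refine le_csInf (himg_ne x') ?_
        rintro w ⟨y, hy, rfl⟩
        have := hgle x y hy
        have h2 := hd1tri x x' y
        linarith
      linarith
    have habs : ∀ x x', |g x - g x'| ≤ d1 x x' := by
      intro x x'
      rw [abs_le]
      constructor
      · have := hglip x' x
        rw [hd1symm x' x] at this
        linarith
      · have := hglip x x'
        linarith
    have hgosc : ∀ (x : Fin n → X) (i : Fin n) (a : X),
        |g (Function.update x i a) - g x| ≤ D := by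
      intro x i a
      refine (habs _ _).trans ?_
      have : d1 (Function.update x i a) x = dist a (x i) := by
        show (∑ j, dist (Function.update x i a j) (x j)) = dist a (x i)
        rw [Finset.sum_eq_single i]
        · simp
        · intro b _ hb
          rw [Function.update_of_ne hb]
          simp
        · simp
      rw [this]
      exact hdistD _ _
    have hgM : ∀ x, |g x| ≤ (n:ℝ) * D := by
      intro x
      obtain ⟨y₀, hy₀⟩ := hAne
      rw [abs_of_nonneg (hg0 x)]
      exact (hgle x y₀ hy₀).trans (hd1D x y₀)
    have hgm : Measurable g := by
      haveI : SecondCountableTopology X := UniformSpace.secondCountable_of_separable X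
      have hcont : Continuous g := by
        rw [Metric.continuous_iff]
        intro b ε hε
        refine ⟨ε / n, by positivity, fun a hab => ?_⟩
        have h1 : d1 a b ≤ n * dist a b := by
          calc d1 a b ≤ ∑ _i : Fin n, dist a b :=
                Finset.sum_le_sum fun i _ => dist_le_pi_dist a b i
            _ = n * dist a b := by simp [mul_comm]
        have h2 := habs a b
        rw [Real.dist_eq]
        have hnpos : (0:ℝ) < n := by exact_mod_cast hn
        have h3 : (n:ℝ) * dist a b < n * (ε / n) := by
          apply mul_lt_mul_of_pos_left hab hnpos
        rw [mul_div_cancel₀ _ (ne_of_gt hnpos)] at h3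
        calc |g a - g b| ≤ d1 a b := h2
          _ ≤ n * dist a b := h1
          _ < ε := h3
      exact hcont.measurable
    -- concentration quantities
    set m : ℝ := ∫ y, g y ∂π with hm
    have hm0 : 0 ≤ m := integral_nonneg hg0
    set L' : ℝ := Real.log (2/κ) with hL'
    have hL'pos : 0 < L' := Real.log_pos (by rw [lt_div_iff₀ hκ0]; linarith)
    set r₀ : ℝ := D * Real.sqrt (2 * n * L') with hr₀
    have hr₀0 : 0 ≤ r₀ := by positivity
    have hnpos : (0:ℝ) < n := by exact_mod_cast hn
    have hr₀sq : r₀ ^ 2 = D ^ 2 * (2 * n * L') := by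
      rw [hr₀, mul_pow, Real.sq_sqrt (by positivity)]
    -- lower tail: measure of {g ≤ 0}
    have hlow : (π {x | g x ≤ 0}).toReal ≤ Real.exp (-(m^2) / (2 * n * D^2)) := by
      have h := chernoff μ D hDpos n hn (fun x => -g x) ((n:ℝ)*D) hgm.neg
        (fun x => by rw [abs_neg]; exact hgM x)
        (fun x i a => by
          beta_reduce
          rw [show -g (Function.update x i a) - -g x = -(g (Function.update x i a) - g x) by ring,
            abs_neg]
          exact hgosc x i a) m hm0
      have hneg : ∫ y, -g y ∂π = -m := by rw [integral_neg]
      have hseteq : {x : Fin n → X | (∫ y, -g y ∂π) + m ≤ -g x} = {x | g x ≤ 0} := by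
        ext x
        rw [hneg]
        simp only [Set.mem_setOf_eq]
        constructor <;> intro h' <;> linarith
      rw [hπ] at hseteq ⊢
      rw [← hseteq]
      exact h
    have hκm : κ/2 ≤ Real.exp (-(m^2) / (2 * n * D^2)) := by
      refine le_trans ?_ hlow
      have hsub : A ⊆ {x | g x ≤ 0} := by
        intro x hx
        have h1 := hgle x x hx
        have : d1 x x = 0 := by
          show (∑ j, dist (x j) (x j)) = 0
          simp
        rw [this] at h1
        exact h1
      have h2 : c ≤ π {x | g x ≤ 0} := le_trans hα1 (measure_mono hsub)
      rw [hc] at h2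
      exact (ENNReal.ofReal_le_iff_le_toReal (measure_ne_top _ _)).mp h2
    have hmr : m ≤ r₀ := by
      have h1 : Real.log (κ/2) ≤ -(m^2) / (2 * n * D^2) :=
        (Real.log_le_iff_le_exp (by linarith)).mpr hκm
      have h2 : Real.log (κ/2) = -L' := by
        rw [hL', show κ/2 = (2/κ)⁻¹ by field_simp, Real.log_inv]
      rw [h2] at h1
      have h3 : m^2 ≤ 2 * n * D^2 * L' := by
        have hden : (0:ℝ) < 2 * n * D^2 := by positivity
        rw [neg_div, neg_le_neg_iff] at h1
        rw [div_le_iff₀ hden] at h1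
        linarith
      nlinarith [hr₀sq, hr₀0, hm0]
    -- upper tail
    have hup : (π {x | m + r₀ ≤ g x}).toReal ≤ κ/2 := by
      have h := chernoff μ D hDpos n hn g ((n:ℝ)*D) hgm hgM hgosc r₀ hr₀0
      rw [← hπ, ← hm] at h
      refine h.trans ?_
      have : -(r₀^2) / (2 * n * D^2) = -L' := by
        rw [hr₀sq]
        field_simp
      rw [this, show -L' = Real.log (κ/2) by
        rw [hL', show κ/2 = (2/κ)⁻¹ by field_simp, Real.log_inv],
        Real.exp_log (by linarith)]
    -- the bad set
    set E : Set (Fin n → X) := {x | f x < α} ∪ {x | m + r₀ ≤ g x} with hE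
    have hEmeas : MeasurableSet E :=
      (hfm measurableSet_Iio).union (measurableSet_le measurable_const hgm)
    have hEbound : π E ≤ ENNReal.ofReal κ := by
      calc π E ≤ π {x | f x < α} + π {x | m + r₀ ≤ g x} := measure_union_le _ _
        _ ≤ c + c := by
            refine add_le_add hα2 ?_
            rw [hc]
            exact (ENNReal.le_ofReal_iff_toReal_le (measure_ne_top _ _) (by linarith)).mpr hup
        _ = ENNReal.ofReal κ := by
            rw [hc, ← ENNReal.ofReal_add (by linarith) (by linarith)]
            norm_num
    have hcompl : ENNReal.ofReal (1 - κ) ≤ π Eᶜ := by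
      rw [measure_compl hEmeas (measure_ne_top _ _), measure_univ]
      calc ENNReal.ofReal (1 - κ) = 1 - ENNReal.ofReal κ := by
            rw [ENNReal.ofReal_sub _ hκ0.le, ENNReal.ofReal_one]
        _ ≤ 1 - π E := tsub_le_tsub_left hEbound 1
    -- inclusion into an interval
    set β : ℝ := α + D ^ (1 - 1/p) * (2 * r₀) ^ (1/p) with hβ
    have hαβ : α ≤ β := by
      rw [hβ]
      have : 0 ≤ D ^ (1 - 1/p) * (2 * r₀) ^ (1/p) := by positivity
      linarith
    have hincl : Eᶜ ⊆ f ⁻¹' (Set.Icc α β) := by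
      intro x hx
      rw [hE, Set.compl_union] at hx
      obtain ⟨hx1, hx2⟩ := hx
      rw [Set.mem_compl_iff, Set.mem_setOf_eq, not_lt] at hx1
      rw [Set.mem_compl_iff, Set.mem_setOf_eq, not_le] at hx2
      refine ⟨hx1, ?_⟩
      have hgx : g x < 2 * r₀ := by linarith
      obtain ⟨w, ⟨y, hyA, rfl⟩, hwlt⟩ := exists_lt_of_csInf_lt (himg_ne x) hgx
      have h1 : f x ≤ f y + D ^ (1 - 1/p) * (d1 x y) ^ (1/p) := by
        have := hHol x y
        have h2 := (abs_le.mp this).2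
        linarith
      have h2 : (d1 x y) ^ (1/p) ≤ (2 * r₀) ^ (1/p) :=
        Real.rpow_le_rpow (hd10 x y) hwlt.le (by positivity)
      have h3 : f y ≤ α := hyA
      calc f x ≤ f y + D ^ (1 - 1/p) * (d1 x y) ^ (1/p) := h1
        _ ≤ α + D ^ (1 - 1/p) * (2 * r₀) ^ (1/p) := by
            have := mul_le_mul_of_nonneg_left h2 (Real.rpow_nonneg hD0 (1 - 1/p))
            linarith
    -- conclude
    have hmem : Metric.diam (Set.Icc α β) ∈ {r : ℝ | ∃ A : Set ℝ, MeasurableSet A ∧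
        IsBounded A ∧ ENNReal.ofReal (1 - κ) ≤ (π.map f) A ∧ r = Metric.diam A} := by
      refine ⟨Set.Icc α β, measurableSet_Icc, Metric.isBounded_Icc _ _, ?_, rfl⟩
      rw [Measure.map_apply hfm measurableSet_Icc]
      exact le_trans hcompl (measure_mono hincl)
    have hfinal : partialDiam (π.map f) (1 - κ) ≤ Metric.diam (Set.Icc α β) :=
      csInf_le hT0 hmem
    rw [Real.diam_Icc hαβ] at hfinal
    have hβα : β - α = D ^ (1 - 1/p) * (2 * (D * Real.sqrt (2 * n * L'))) ^ (1/p) := by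
      rw [hβ, hr₀]; ring
    rw [hβα] at hfinal
    refine hfinal.trans ?_
    rw [hL']
    exact arith_bound D p κ n hDpos hp hκ0 hκ1 hn
end
end

section
/- Let X be an mm-space and r > 0. Then α_X(r) ≤ sup{ κ > 0 : ObsDiam(X; -κ) ≥ r }, where α_X is the concentration function of X. -/
open MeasureTheory Filter Topology Bornology
open scoped ENNReal

noncomputable section

/-- The concentration function `α_X(r)`: the supremum of `1 - μ(A_r)` over Borel sets `A`
with `μ A ≥ 1/2`, where `A_r` is the open `r`-neighborhood of `A`. -/
def concFn {X : Type*} [PseudoMetricSpace X] [MeasurableSpace X]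
    (μ : Measure X) (r : ℝ) : ℝ :=
  sSup {e : ℝ | ∃ A : Set X, MeasurableSet A ∧ (1 / 2 : ℝ≥0∞) ≤ μ A ∧
    e = 1 - (μ (Metric.thickening r A)).toReal}

/-- **Proposition 2.6 (2).** `α_X(r) ≤ sup{κ > 0 : ObsDiam(X;-κ) ≥ r}`. -/
theorem concFn_le_sup_obsDiam
    {X : Type*} [MetricSpace X] [CompleteSpace X] [TopologicalSpace.SeparableSpace X]
    [MeasurableSpace X] [BorelSpace X]
    (μ : Measure X) [IsProbabilityMeasure μ]
    (r : ℝ) (hr : 0 < r) :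
    concFn μ r ≤ sSup {κ : ℝ | 0 < κ ∧ r ≤ obsDiam dist μ κ} := by
  set T := {κ : ℝ | 0 < κ ∧ r ≤ obsDiam dist μ κ} with hTdef
  -- every element of T is ≤ 1
  have hT1 : ∀ κ ∈ T, κ ≤ 1 := by
    rintro κ ⟨hκ0, hκr⟩
    by_contra hκ1
    push_neg at hκ1
    have hobs : obsDiam dist μ κ ≤ 0 := by
      apply Real.sSup_le _ le_rfl
      rintro u ⟨f, hf, hlip, rfl⟩
      apply csInf_le
      · exact ⟨0, by rintro s ⟨B, -, -, -, rfl⟩; exact Metric.diam_nonneg⟩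
      · refine ⟨∅, MeasurableSet.empty, Bornology.isBounded_empty, ?_, Metric.diam_empty.symm⟩
        have : ENNReal.ofReal (1 - κ) = 0 := ENNReal.ofReal_eq_zero.2 (by linarith)
        simp [this]
    linarith
  have hTbdd : BddAbove T := ⟨1, hT1⟩
  have hTnonneg : (0 : ℝ) ≤ sSup T := Real.sSup_nonneg (fun κ hκ => le_of_lt hκ.1)
  apply Real.sSup_le _ hTnonneg
  rintro e ⟨A, hAm, hμA, rfl⟩
  set e := 1 - (μ (Metric.thickening r A)).toReal with hedef
  rcases le_or_gt e 0 with he | he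
  · exact he.trans hTnonneg
  -- now e > 0
  have hAne : A.Nonempty := by
    rcases A.eq_empty_or_nonempty with h | h
    · exfalso; rw [h] at hμA; simp at hμA
    · exact h
  have hAne2 := hAne
  obtain ⟨x0, -⟩ := hAne2
  -- μ (thickening r A) ≥ 1/2, hence e ≤ 1/2
  have hthick_ge : (1 / 2 : ℝ≥0∞) ≤ μ (Metric.thickening r A) :=
    hμA.trans (measure_mono (Metric.self_subset_thickening hr A))
  have hthick_ne : μ (Metric.thickening r A) ≠ ∞ := measure_ne_top μ _
  have hthick_toReal : (1 / 2 : ℝ) ≤ (μ (Metric.thickening r A)).toReal := by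
    have := ENNReal.toReal_mono hthick_ne hthick_ge
    simpa using this
  have he_half : e ≤ 1 / 2 := by rw [hedef]; linarith
  -- the map f
  set f : X → ℝ := fun x => Metric.infDist x A with hfdef
  have hfm : Measurable f := (Metric.continuous_infDist_pt A).measurable
  have hflip : ∀ x y, |f x - f y| ≤ dist x y := by
    intro x y
    rw [abs_sub_le_iff]
    constructor
    · have := Metric.infDist_le_infDist_add_dist (x := x) (y := y) (s := A)
      linarith
    · have := Metric.infDist_le_infDist_add_dist (x := y) (y := x) (s := A)
      rw [dist_comm] at this
      linarith
  -- key claim: every κ in (0, e) belongs to T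
  have hkey : ∀ κ : ℝ, 0 < κ → κ < e → κ ∈ T := by
    intro κ hκ0 hκe
    refine ⟨hκ0, ?_⟩
    -- tightness: choose n with ofReal (1-κ) ≤ μ (ball x0 n)
    have hofreal_lt : ENNReal.ofReal (1 - κ) < 1 := ENNReal.ofReal_lt_one.2 (by linarith)
    obtain ⟨n, hn⟩ : ∃ n : ℕ, ENNReal.ofReal (1 - κ) ≤ μ (Metric.ball x0 n) := by
      have hmono : Monotone (fun n : ℕ => Metric.ball x0 n) := fun a b hab =>
        Metric.ball_subset_ball (by exact_mod_cast hab)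
      have hsup : μ (⋃ n : ℕ, Metric.ball x0 n) = ⨆ n : ℕ, μ (Metric.ball x0 n) :=
        hmono.measure_iUnion
      rw [Metric.iUnion_ball_nat, measure_univ] at hsup
      have : ENNReal.ofReal (1 - κ) < ⨆ n : ℕ, μ (Metric.ball x0 n) := by
        rw [← hsup]; exact hofreal_lt
      obtain ⟨n, hn⟩ := lt_iSup_iff.1 this
      exact ⟨n, hn.le⟩
    -- the set of observable values
    set U := {s : ℝ | ∃ g : X → ℝ, Measurable g ∧ (∀ x y, |g x - g y| ≤ dist x y) ∧
      s = partialDiam (μ.map g) (1 - κ)} with hUdef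
    -- for any admissible g, the closed ball of radius n around g x0 has big measure
    have hball : ∀ g : X → ℝ, Measurable g → (∀ x y, |g x - g y| ≤ dist x y) →
        ENNReal.ofReal (1 - κ) ≤ (μ.map g) (Metric.closedBall (g x0) n) := by
      intro g hgm hglip
      rw [Measure.map_apply hgm measurableSet_closedBall]
      refine hn.trans (measure_mono ?_)
      intro x hx
      simp only [Set.mem_preimage, Metric.mem_closedBall, Real.dist_eq]
      exact (hglip x x0).trans (le_of_lt hx)
    -- U is bounded above by 2n
    have hUbdd : BddAbove U := by
      refine ⟨2 * n, ?_⟩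
      rintro u ⟨g, hgm, hglip, rfl⟩
      refine csInf_le_of_le ⟨0, by rintro s ⟨B, -, -, -, rfl⟩; exact Metric.diam_nonneg⟩
        ⟨Metric.closedBall (g x0) n, measurableSet_closedBall,
          Metric.isBounded_closedBall, hball g hgm hglip, rfl⟩
        (Metric.diam_closedBall n.cast_nonneg)
    -- r ≤ partialDiam (μ.map f) (1 - κ)
    have hru : r ≤ partialDiam (μ.map f) (1 - κ) := by
      apply le_csInf
      · exact ⟨Metric.diam (Metric.closedBall (f x0) n),
          Metric.closedBall (f x0) n, measurableSet_closedBall,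
          Metric.isBounded_closedBall, hball f hfm hflip, rfl⟩
      rintro s ⟨B, hBm, hBb, hνB, rfl⟩
      -- B contains a point ≤ 0
      have hb : ∃ b ∈ B, b ≤ 0 := by
        by_contra h
        push_neg at h
        have hBsub : B ⊆ Set.Ioi 0 := fun b hb => h b hb
        have h1 : (μ.map f) B ≤ (μ.map f) (Set.Ioi 0) := measure_mono hBsub
        have h2 : (μ.map f) (Set.Ioi 0) ≤ μ Aᶜ := by
          rw [Measure.map_apply hfm measurableSet_Ioi]
          refine measure_mono ?_
          intro x hx
          simp only [Set.mem_preimage, Set.mem_Ioi] at hx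
          intro hxA
          rw [hfdef] at hx
          simp only [Metric.infDist_zero_of_mem hxA] at hx
          exact lt_irrefl 0 hx
        have h3 : μ Aᶜ ≤ 1 / 2 := by
          rw [prob_compl_eq_one_sub hAm]
          calc (1 : ℝ≥0∞) - μ A ≤ 1 - 1 / 2 := tsub_le_tsub_left hμA 1
          _ = 1 / 2 := by rw [ENNReal.sub_half ENNReal.one_ne_top]
        have hhalf_lt : (1 / 2 : ℝ≥0∞) < ENNReal.ofReal (1 - κ) := by
          have : (1 / 2 : ℝ≥0∞) = ENNReal.ofReal (1 / 2) := by
            rw [ENNReal.ofReal_div_of_pos (by norm_num)]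
            norm_num
          rw [this]
          exact (ENNReal.ofReal_lt_ofReal_iff (by linarith)).2 (by linarith)
        exact absurd (hνB.trans (h1.trans (h2.trans h3))) (not_le.2 hhalf_lt)
      -- B contains a point ≥ r
      have hb' : ∃ b ∈ B, r ≤ b := by
        by_contra h
        push_neg at h
        have hBsub : B ⊆ Set.Iio r := fun b hb => h b hb
        have h1 : (μ.map f) B ≤ (μ.map f) (Set.Iio r) := measure_mono hBsub
        have h2 : (μ.map f) (Set.Iio r) = μ (Metric.thickening r A) := by
          rw [Measure.map_apply hfm measurableSet_Iio]
          congr 1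
          ext x
          simp only [Set.mem_preimage, Set.mem_Iio, hfdef]
          exact (Metric.mem_thickening_iff_infDist_lt hAne).symm
        have h3 : μ (Metric.thickening r A) < ENNReal.ofReal (1 - κ) := by
          rw [ENNReal.lt_ofReal_iff_toReal_lt hthick_ne]
          rw [hedef] at hκe
          linarith
        rw [h2] at h1
        exact absurd (hνB.trans h1) (not_le.2 h3)
      obtain ⟨b, hbB, hb0⟩ := hb
      obtain ⟨b', hb'B, hrb'⟩ := hb'
      calc r ≤ b' - b := by linarith
      _ ≤ |b' - b| := le_abs_self _
      _ = dist b' b := (Real.dist_eq b' b).symm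
      _ ≤ Metric.diam B := Metric.dist_le_diam_of_mem hBb hb'B hbB
    calc r ≤ partialDiam (μ.map f) (1 - κ) := hru
    _ ≤ obsDiam dist μ κ := le_csSup hUbdd ⟨f, hfm, hflip, rfl⟩
  -- conclude e ≤ sSup T
  by_contra hcon
  push_neg at hcon
  set κ := (max (sSup T) 0 + e) / 2 with hκdef
  have hκ0 : 0 < κ := by
    have : (0 : ℝ) ≤ max (sSup T) 0 := le_max_right _ _
    rw [hκdef]; linarith
  have hκe : κ < e := by
    have : max (sSup T) 0 < e := max_lt hcon he
    rw [hκdef]; linarith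
  have hκT : κ ∈ T := hkey κ hκ0 hκe
  have : κ ≤ sSup T := le_csSup hTbdd hκT
  have hsupκ : sSup T < κ := by
    have h1 : sSup T ≤ max (sSup T) 0 := le_max_left _ _
    have h2 : max (sSup T) 0 < κ := by
      have : max (sSup T) 0 < e := max_lt hcon he
      rw [hκdef]; linarith
    linarith
  linarith
end
end

section
/- For any mm-space X and any κ > 0, one has ObsDiam(X; -2κ) ≤ Sep(X; κ, κ). -/
open MeasureTheory Filter Topology Bornology Set
open scoped ENNReal

noncomputable section

/-- The distance between two subsets, with respect to an explicit distance `d`. -/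
def setDist' {X : Type*} (d : X → X → ℝ) (A B : Set X) : ℝ :=
  sInf {r : ℝ | ∃ x ∈ A, ∃ y ∈ B, r = d x y}

/-- The separation distance `Sep(X; κ₀, κ₁)`: the supremum of `d(A₀, A₁)` over pairs of
Borel sets with `μ A₀ ≥ κ₀` and `μ A₁ ≥ κ₁` (zero if no such pair exists). -/
def sepTwo {X : Type*} [MeasurableSpace X] (d : X → X → ℝ) (μ : Measure X)
    (κ₀ κ₁ : ℝ) : ℝ :=
  sSup ({0} ∪ {r : ℝ | ∃ A₀ A₁ : Set X, MeasurableSet A₀ ∧ MeasurableSet A₁ ∧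
    ENNReal.ofReal κ₀ ≤ μ A₀ ∧ ENNReal.ofReal κ₁ ≤ μ A₁ ∧ r = setDist' d A₀ A₁})

-- auxiliary: measure of Iio bounded via cdf bound on the left
lemma measure_Iio_le_ofReal (ν : Measure ℝ) [IsProbabilityMeasure ν] (c q : ℝ)
    (h : ∀ t < c, ProbabilityTheory.cdf ν t ≤ q) : ν (Iio c) ≤ ENNReal.ofReal q := by
  have hU : Iio c = ⋃ n : ℕ, Iic (c - 1 / (n + 1)) := by
    ext x
    simp only [mem_Iio, mem_iUnion, mem_Iic]
    constructor
    · intro hx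
      obtain ⟨n, hn⟩ := exists_nat_one_div_lt (show (0:ℝ) < c - x by linarith)
      exact ⟨n, by linarith⟩
    · rintro ⟨n, hn⟩
      have : (0:ℝ) < 1 / (n + 1) := by positivity
      linarith
  have hm : Monotone fun n : ℕ => Iic (c - 1 / (n + 1 : ℝ)) := by
    intro m n hmn
    apply Iic_subset_Iic.2
    have hc : (m : ℝ) ≤ n := Nat.cast_le.2 hmn
    have : (1 : ℝ) / (n + 1) ≤ 1 / (m + 1) := by
      apply one_div_le_one_div_of_le (by positivity)
      linarith
    linarith
  rw [hU, hm.measure_iUnion]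
  refine iSup_le fun n => ?_
  rw [← ProbabilityTheory.ofReal_cdf]
  apply ENNReal.ofReal_le_ofReal
  apply h
  have : (0:ℝ) < 1 / (n + 1) := by positivity
  linarith

lemma partialDiam_bddBelow (ν : Measure ℝ) (α : ℝ) :
    BddBelow {r : ℝ | ∃ A : Set ℝ, MeasurableSet A ∧ IsBounded A ∧
      ENNReal.ofReal α ≤ ν A ∧ r = Metric.diam A} := by
  refine ⟨0, ?_⟩
  rintro r ⟨A, -, -, -, rfl⟩
  exact Metric.diam_nonneg

/-- **Proposition 2.8, first inequality.** `ObsDiam(X;-2κ) ≤ Sep(X;κ,κ)` for `κ > 0`. -/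
theorem obsDiam_le_sep
    {X : Type*} [MetricSpace X] [CompleteSpace X] [TopologicalSpace.SeparableSpace X]
    [MeasurableSpace X] [BorelSpace X]
    (μ : Measure X) [IsProbabilityMeasure μ]
    (κ : ℝ) (hκ : 0 < κ) :
    obsDiam dist μ (2 * κ) ≤ sepTwo dist μ κ κ := by
  -- X is nonempty
  have hXne : Nonempty X := by
    by_contra h
    rw [not_nonempty_iff] at h
    have := measure_univ (μ := μ)
    simp [Set.univ_eq_empty_iff.2 h] at this
  obtain ⟨x₀⟩ := hXne
  -- a radius R capturing most of the mass
  obtain ⟨R, hR0, hRκ⟩ : ∃ R : ℝ, 0 ≤ R ∧ μ (Metric.ball x₀ R)ᶜ < ENNReal.ofReal κ := by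
    have hmono : Monotone fun n : ℕ => Metric.ball x₀ n := fun m n hmn =>
      Metric.ball_subset_ball (by exact_mod_cast hmn)
    have hU : (⋃ n : ℕ, Metric.ball x₀ n) = univ := by
      ext x
      simp only [mem_iUnion, Metric.mem_ball, mem_univ, iff_true]
      obtain ⟨n, hn⟩ := exists_nat_gt (dist x x₀)
      exact ⟨n, hn⟩
    have ht := tendsto_measure_iUnion_atTop (μ := μ) hmono
    rw [hU, measure_univ] at ht
    have hcompl : Tendsto (fun n : ℕ => μ (Metric.ball x₀ n)ᶜ) atTop (𝓝 0) := by
      have : (fun n : ℕ => μ (Metric.ball x₀ n)ᶜ) =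
          fun n : ℕ => 1 - μ (Metric.ball x₀ n) := by
        funext n
        exact prob_compl_eq_one_sub Metric.isOpen_ball.measurableSet
      rw [this]
      have := ENNReal.Tendsto.sub (tendsto_const_nhds (x := (1 : ℝ≥0∞))) ht (Or.inl ENNReal.one_ne_top)
      simpa using this
    have := hcompl.eventually_lt_const (by simp [ENNReal.ofReal_pos, hκ] :
      (0 : ℝ≥0∞) < ENNReal.ofReal κ)
    obtain ⟨n, hn⟩ := this.exists
    exact ⟨n, Nat.cast_nonneg n, hn⟩
  -- the separation set is bounded above by 2R
  set sepSet := ({0} ∪ {r : ℝ | ∃ A₀ A₁ : Set X, MeasurableSet A₀ ∧ MeasurableSet A₁ ∧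
    ENNReal.ofReal κ ≤ μ A₀ ∧ ENNReal.ofReal κ ≤ μ A₁ ∧ r = setDist' dist A₀ A₁}) with hsepSet
  have hmeets : ∀ A : Set X, ENNReal.ofReal κ ≤ μ A → (A ∩ Metric.ball x₀ R).Nonempty := by
    intro A hA
    rcases (A ∩ Metric.ball x₀ R).eq_empty_or_nonempty with he | h
    · exfalso
      have hsub : A ⊆ (Metric.ball x₀ R)ᶜ := by
        intro x hx
        intro hxb
        have hmem : x ∈ A ∩ Metric.ball x₀ R := ⟨hx, hxb⟩
        rw [he] at hmem
        exact hmem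
      exact absurd (lt_of_le_of_lt (le_trans hA (measure_mono hsub)) hRκ) (lt_irrefl _)
    · exact h
  have hbdd : BddAbove sepSet := by
    refine ⟨2 * R, ?_⟩
    rintro r (rfl | ⟨A₀, A₁, -, -, hμ0, hμ1, rfl⟩)
    · positivity
    · obtain ⟨x, hxA, hxB⟩ := hmeets A₀ hμ0
      obtain ⟨y, hyA, hyB⟩ := hmeets A₁ hμ1
      have : setDist' dist A₀ A₁ ≤ dist x y := by
        apply csInf_le
        · refine ⟨0, ?_⟩
          rintro r ⟨x, -, y, -, rfl⟩
          exact dist_nonneg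
        · exact ⟨x, hxA, y, hyA, rfl⟩
      refine this.trans ?_
      calc dist x y ≤ dist x x₀ + dist x₀ y := dist_triangle _ _ _
        _ ≤ R + R := by
            rw [Metric.mem_ball] at hxB hyB
            rw [dist_comm x₀ y] at *
            linarith
        _ = 2 * R := by ring
  have hsep0 : 0 ≤ sepTwo dist μ κ κ := le_csSup hbdd (Or.inl rfl)
  apply Real.sSup_le _ hsep0
  rintro r ⟨f, hf, hlip, rfl⟩
  by_cases h12 : 1 - 2 * κ ≤ 0
  · -- trivial case
    refine le_trans ?_ hsep0
    apply csInf_le (partialDiam_bddBelow _ _)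
    exact ⟨∅, MeasurableSet.empty, isBounded_empty,
      by simp [ENNReal.ofReal_eq_zero.2 h12], Metric.diam_empty.symm⟩
  push_neg at h12
  have hκhalf : κ < 1 / 2 := by linarith
  set ν := μ.map f with hν
  haveI : IsProbabilityMeasure ν := Measure.isProbabilityMeasure_map hf.aemeasurable
  set F := ProbabilityTheory.cdf ν with hF
  -- quantiles
  set S₁ := {t : ℝ | κ ≤ F t} with hS₁
  set S₂ := {t : ℝ | 1 - κ ≤ F t} with hS₂def
  have hsub : S₂ ⊆ S₁ := by
    intro t ht
    simp only [hS₁, hS₂def, Set.mem_setOf_eq] at *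
    linarith
  have hS₂ne : S₂.Nonempty := by
    have := (ProbabilityTheory.tendsto_cdf_atTop ν).eventually_const_lt
      (show 1 - κ < 1 by linarith)
    obtain ⟨t, ht⟩ := this.exists
    exact ⟨t, le_of_lt ht⟩
  have hS₁ne : S₁.Nonempty := hS₂ne.mono hsub
  have hS₁bdd : BddBelow S₁ := by
    have := (ProbabilityTheory.tendsto_cdf_atBot ν).eventually_lt_const hκ
    rw [eventually_atBot] at this
    obtain ⟨t₀, ht₀⟩ := this
    refine ⟨t₀, fun s hs => ?_⟩
    by_contra hc
    push_neg at hc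
    exact absurd hs (not_le.2 (ht₀ s hc.le))
  have hS₂bdd : BddBelow S₂ := hS₁bdd.mono hsub
  set a := sInf S₁ with ha
  set b := sInf S₂ with hb
  have hab : a ≤ b := csInf_le_csInf hS₁bdd hS₂ne hsub
  -- right-continuity gives the quantile values
  have hquant : ∀ (q : ℝ), {t : ℝ | q ≤ F t}.Nonempty → BddBelow {t : ℝ | q ≤ F t} →
      q ≤ F (sInf {t : ℝ | q ≤ F t}) := by
    intro q hne hbd
    set c := sInf {t : ℝ | q ≤ F t} with hc
    have htend : Tendsto F (𝓝[>] c) (𝓝 (F c)) :=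
      (F.right_continuous c).mono_left (nhdsWithin_mono _ Ioi_subset_Ici_self)
    refine ge_of_tendsto htend ?_
    apply eventually_nhdsWithin_of_forall
    intro t ht
    obtain ⟨s, hs, hst⟩ := exists_lt_of_csInf_lt hne ht
    exact le_trans hs (F.mono hst.le)
  have hFa : κ ≤ F a := hquant κ hS₁ne hS₁bdd
  have hFb : 1 - κ ≤ F b := hquant (1 - κ) hS₂ne hS₂bdd
  have hltS : ∀ (q : ℝ) (t : ℝ), BddBelow {u : ℝ | q ≤ F u} → t < sInf {u : ℝ | q ≤ F u} →
      F t < q := by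
    intro q t hbd hts
    by_contra hc
    push_neg at hc
    exact absurd (csInf_le hbd hc) (not_le.2 hts)
  -- measure bounds
  have hIioa : ν (Iio a) ≤ ENNReal.ofReal κ :=
    measure_Iio_le_ofReal ν a κ fun t ht => (hltS κ t hS₁bdd ht).le
  have hIiob : ν (Iio b) ≤ ENNReal.ofReal (1 - κ) :=
    measure_Iio_le_ofReal ν b (1 - κ) fun t ht => (hltS (1 - κ) t hS₂bdd ht).le
  have hIicb : ENNReal.ofReal (1 - κ) ≤ ν (Iic b) := by
    rw [← ProbabilityTheory.ofReal_cdf]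
    exact ENNReal.ofReal_le_ofReal hFb
  have hIica : ENNReal.ofReal κ ≤ ν (Iic a) := by
    rw [← ProbabilityTheory.ofReal_cdf]
    exact ENNReal.ofReal_le_ofReal hFa
  have hIcib : ENNReal.ofReal κ ≤ ν (Ici b) := by
    have hcompl : Ici b = (Iio b)ᶜ := by simp
    rw [hcompl, prob_compl_eq_one_sub measurableSet_Iio]
    calc ENNReal.ofReal κ = 1 - ENNReal.ofReal (1 - κ) := by
          rw [← ENNReal.ofReal_one, ← ENNReal.ofReal_sub _ (by linarith : (0:ℝ) ≤ 1 - κ)]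
          norm_num
      _ ≤ 1 - ν (Iio b) := tsub_le_tsub_left hIiob 1
  have hIcc : ENNReal.ofReal (1 - 2 * κ) ≤ ν (Icc a b) := by
    have hdiff : Icc a b = Iic b \ Iio a := by
      ext x
      simp only [mem_Icc, mem_diff, mem_Iic, mem_Iio, not_lt]
      tauto
    have hsub' : Iio a ⊆ Iic b := fun x hx => le_trans (le_of_lt hx) hab
    rw [hdiff, measure_diff hsub' measurableSet_Iio.nullMeasurableSet (measure_ne_top ν _)]
    calc ENNReal.ofReal (1 - 2 * κ) = ENNReal.ofReal ((1 - κ) - κ) := by ring_nf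
      _ = ENNReal.ofReal (1 - κ) - ENNReal.ofReal κ := ENNReal.ofReal_sub _ hκ.le
      _ ≤ ν (Iic b) - ν (Iio a) := tsub_le_tsub hIicb hIioa
  -- partial diameter bound
  have hpd : partialDiam ν (1 - 2 * κ) ≤ b - a := by
    apply csInf_le (partialDiam_bddBelow _ _)
    exact ⟨Icc a b, measurableSet_Icc, Metric.isBounded_Icc a b, hIcc, (Real.diam_Icc hab).symm⟩
  refine hpd.trans ?_
  -- separation bound
  set A₀ := f ⁻¹' (Iic a) with hA₀
  set A₁ := f ⁻¹' (Ici b) with hA₁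
  have hμ0 : ENNReal.ofReal κ ≤ μ A₀ := by
    rw [hA₀, ← Measure.map_apply hf measurableSet_Iic]
    exact hIica
  have hμ1 : ENNReal.ofReal κ ≤ μ A₁ := by
    rw [hA₁, ← Measure.map_apply hf measurableSet_Ici]
    exact hIcib
  have hA₀ne : A₀.Nonempty := by
    apply nonempty_of_measure_ne_zero (μ := μ)
    intro h
    rw [h] at hμ0
    exact absurd (le_antisymm hμ0 zero_le) (ne_of_gt (ENNReal.ofReal_pos.2 hκ))
  have hA₁ne : A₁.Nonempty := by
    apply nonempty_of_measure_ne_zero (μ := μ)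
    intro h
    rw [h] at hμ1
    exact absurd (le_antisymm hμ1 zero_le) (ne_of_gt (ENNReal.ofReal_pos.2 hκ))
  have hba : b - a ≤ setDist' dist A₀ A₁ := by
    apply le_csInf
    · obtain ⟨x, hx⟩ := hA₀ne
      obtain ⟨y, hy⟩ := hA₁ne
      exact ⟨dist x y, x, hx, y, hy, rfl⟩
    · rintro r ⟨x, hx, y, hy, rfl⟩
      have h₁ : f x ≤ a := hx
      have h₂ : b ≤ f y := hy
      have := hlip x y
      have habs : f y - f x ≤ |f x - f y| := by
        rw [abs_sub_comm]
        exact le_abs_self _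
      linarith
  refine hba.trans ?_
  apply le_csSup hbdd
  exact Or.inr ⟨A₀, A₁, hf measurableSet_Iic, hf measurableSet_Ici, hμ0, hμ1, rfl⟩
end
end

section
/- (Limit formula for observable diameter.) Let X and X_n, n = 1, 2, …, be mm-spaces such that X_n converges to X in the box distance as n → ∞. Then for any κ > 0, ObsDiam(X; -κ) = lim_{ε→0+} liminf_{n→∞} ObsDiam(X_n; -(κ+ε)) = lim_{ε→0+} limsup_{n→∞} ObsDiam(X_n; -(κ+ε)). -/
open MeasureTheory Filter Topology Bornology

noncomputable section

/-- A parameter of an mm-space: a Borel map `φ : [0,1) → X` pushing the Lebesgue measure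
forward to `μ`. -/
def IsParameter {X : Type*} [MeasurableSpace X] (φ : ℝ → X) (μ : Measure X) : Prop :=
  Measurable φ ∧ Measure.map φ (volume.restrict (Set.Ico (0 : ℝ) 1)) = μ

/-- The box distance `□(X,Y)` between two mm-spaces, given by explicit distance
functions `dX`, `dY`: the infimum of `ε ≥ 0` admitting parameters `φ, ψ` and a Borel set
`I₀ ⊆ [0,1)` of Lebesgue measure `≥ 1 - ε` on which the pulled-back distances
differ by at most `ε`. -/
def boxDist {X Y : Type*} [MeasurableSpace X] [MeasurableSpace Y]
    (dX : X → X → ℝ) (dY : Y → Y → ℝ) (μX : Measure X) (μY : Measure Y) : ℝ :=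
  sInf {ε : ℝ | 0 ≤ ε ∧ ∃ φ : ℝ → X, ∃ ψ : ℝ → Y,
    IsParameter φ μX ∧ IsParameter ψ μY ∧
    ∃ I₀ : Set ℝ, MeasurableSet I₀ ∧ I₀ ⊆ Set.Ico (0 : ℝ) 1 ∧
      ENNReal.ofReal (1 - ε) ≤ volume I₀ ∧
      ∀ s ∈ I₀, ∀ t ∈ I₀, |dX (φ s) (φ t) - dY (ψ s) (ψ t)| ≤ ε}

/-- The distance function of a metric space (helper to supply instances explicitly). -/
def distFun (X : Type*) [MetricSpace X] : X → X → ℝ := fun a b => dist a b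


open Set Metric

set_option linter.unusedSectionVars false
set_option linter.unusedVariables false

namespace ObsAux

lemma pd_set_nonneg {ν : Measure ℝ} {α : ℝ} :
    ∀ r ∈ {r : ℝ | ∃ A : Set ℝ, MeasurableSet A ∧ IsBounded A ∧
      ENNReal.ofReal α ≤ ν A ∧ r = Metric.diam A}, 0 ≤ r := by
  rintro r ⟨A, -, -, -, rfl⟩; exact Metric.diam_nonneg

lemma pd_bddBelow {ν : Measure ℝ} {α : ℝ} :
    BddBelow {r : ℝ | ∃ A : Set ℝ, MeasurableSet A ∧ IsBounded A ∧
      ENNReal.ofReal α ≤ ν A ∧ r = Metric.diam A} :=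
  ⟨0, pd_set_nonneg⟩

lemma partialDiam_nonneg (ν : Measure ℝ) (α : ℝ) : 0 ≤ partialDiam ν α :=
  Real.sInf_nonneg pd_set_nonneg

lemma partialDiam_le {ν : Measure ℝ} {α : ℝ} {A : Set ℝ} (hA : MeasurableSet A)
    (hAb : IsBounded A) (hm : ENNReal.ofReal α ≤ ν A) :
    partialDiam ν α ≤ Metric.diam A :=
  csInf_le pd_bddBelow ⟨A, hA, hAb, hm, rfl⟩

lemma partialDiam_eq_zero_of_nonpos (ν : Measure ℝ) {α : ℝ} (hα : α ≤ 0) :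
    partialDiam ν α = 0 := by
  refine le_antisymm ?_ (partialDiam_nonneg ν α)
  have h := partialDiam_le (ν := ν) (α := α) MeasurableSet.empty isBounded_empty
    (by simp [ENNReal.ofReal_of_nonpos hα])
  simpa using h

/-- Tightness on ℝ. -/
lemma exists_Icc_mass (ν : Measure ℝ) [IsProbabilityMeasure ν] {α : ℝ} (hα : α < 1) :
    ∃ M : ℝ, 0 < M ∧ ENNReal.ofReal α ≤ ν (Set.Icc (-M) M) := by
  have hmono : Monotone (fun n : ℕ => Set.Icc (-(n:ℝ)) n) := by
    intro a b hab
    exact Set.Icc_subset_Icc (by exact_mod_cast neg_le_neg (Nat.cast_le.2 hab)) (by exact_mod_cast hab)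
  have hU : (⋃ n : ℕ, Set.Icc (-(n:ℝ)) n) = Set.univ := by
    ext x; simp only [Set.mem_iUnion, Set.mem_Icc, Set.mem_univ, iff_true]
    obtain ⟨n, hn⟩ := exists_nat_ge |x|
    exact ⟨n, by cases abs_le.1 hn; constructor <;> linarith [abs_le.1 hn]⟩
  have ht := tendsto_measure_iUnion_atTop (μ := ν) hmono
  rw [hU, measure_univ] at ht
  have hlt : ENNReal.ofReal α < 1 := ENNReal.ofReal_lt_one.2 hα
  obtain ⟨n, hn⟩ := (ht.eventually_const_lt hlt).exists
  refine ⟨(n:ℝ) + 1, by positivity, le_trans hn.le (measure_mono ?_)⟩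
  exact Set.Icc_subset_Icc (by linarith) (by linarith)

lemma pd_set_nonempty (ν : Measure ℝ) [IsProbabilityMeasure ν] {α : ℝ} (hα : α < 1) :
    ({r : ℝ | ∃ A : Set ℝ, MeasurableSet A ∧ IsBounded A ∧
      ENNReal.ofReal α ≤ ν A ∧ r = Metric.diam A}).Nonempty := by
  obtain ⟨M, hM, h⟩ := exists_Icc_mass ν hα
  exact ⟨_, Set.Icc (-M) M, measurableSet_Icc, isBounded_Icc _ _, h, rfl⟩

lemma partialDiam_mono (ν : Measure ℝ) [IsProbabilityMeasure ν] {α α' : ℝ}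
    (h : α ≤ α') (hα' : α' < 1) : partialDiam ν α ≤ partialDiam ν α' := by
  refine csInf_le_csInf pd_bddBelow (pd_set_nonempty ν hα') ?_
  rintro r ⟨A, hA, hAb, hm, rfl⟩
  exact ⟨A, hA, hAb, le_trans (ENNReal.ofReal_le_ofReal h) hm, rfl⟩

lemma partialDiam_singleton (ν : Measure ℝ) [IsProbabilityMeasure ν] {α : ℝ} {c : ℝ}
    (hν : ν {c} = 1) : partialDiam ν α = 0 := by
  rcases le_or_gt α 0 with h | h
  · exact partialDiam_eq_zero_of_nonpos ν h
  rcases le_or_gt α 1 with h1 | h1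
  · refine le_antisymm ?_ (partialDiam_nonneg ν α)
    have := partialDiam_le (ν := ν) (α := α) (A := {c}) (measurableSet_singleton c)
      isBounded_singleton (by rw [hν]; exact_mod_cast ENNReal.ofReal_le_one.2 h1)
    simpa using this
  · -- α > 1 : the defining set is empty
    have : {r : ℝ | ∃ A : Set ℝ, MeasurableSet A ∧ IsBounded A ∧
        ENNReal.ofReal α ≤ ν A ∧ r = Metric.diam A} = ∅ := by
      ext r
      simp only [Set.mem_setOf_eq, Set.mem_empty_iff_false, iff_false, not_exists]
      rintro A ⟨hA, hAb, hm, rfl⟩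
      have h1' : (1 : ENNReal) < ENNReal.ofReal α := by
        rw [← ENNReal.ofReal_one]
        exact (ENNReal.ofReal_lt_ofReal_iff_of_nonneg one_pos.le).2 h1
      exact absurd (hm.trans prob_le_one) h1'.not_ge
    unfold partialDiam
    rw [this, Real.sInf_empty]

end ObsAux

namespace ObsAux2
open ObsAux

variable {X : Type*} [MeasurableSpace X]

lemma nonempty_of_prob (μ : Measure X) [IsProbabilityMeasure μ] : Nonempty X := by
  by_contra h
  have : (Set.univ : Set X) = ∅ := by
    simp [Set.eq_empty_iff_forall_notMem]; exact fun x => h ⟨x⟩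
  have h1 := measure_univ (μ := μ)
  rw [this] at h1; simp at h1

lemma zero_mem_obsSet (d : X → X → ℝ) (hd : ∀ x y, 0 ≤ d x y)
    (μ : Measure X) [IsProbabilityMeasure μ] (κ : ℝ) :
    (0:ℝ) ∈ {r : ℝ | ∃ f : X → ℝ, Measurable f ∧ (∀ x y, |f x - f y| ≤ d x y) ∧
      r = partialDiam (μ.map f) (1 - κ)} := by
  have hne : Nonempty X := nonempty_of_prob μ
  obtain ⟨x₀⟩ := hne
  refine ⟨fun _ => (0:ℝ), measurable_const, fun x y => by simpa using hd x y, ?_⟩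
  have hmap : μ.map (fun _ => (0:ℝ)) = Measure.dirac 0 := by
    rw [Measure.map_const]; simp
  haveI : IsProbabilityMeasure (μ.map (fun _ : X => (0:ℝ))) := by
    rw [hmap]; infer_instance
  refine (partialDiam_singleton _ (c := 0) ?_).symm
  rw [hmap]; simp

lemma obsSet_nonempty (d : X → X → ℝ) (hd : ∀ x y, 0 ≤ d x y)
    (μ : Measure X) [IsProbabilityMeasure μ] (κ : ℝ) :
    ({r : ℝ | ∃ f : X → ℝ, Measurable f ∧ (∀ x y, |f x - f y| ≤ d x y) ∧
      r = partialDiam (μ.map f) (1 - κ)}).Nonempty :=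
  ⟨0, zero_mem_obsSet d hd μ κ⟩

variable {Y : Type*} [MetricSpace Y] [MeasurableSpace Y] [BorelSpace Y]

lemma obsSet_bddAbove (μ : Measure Y) [IsProbabilityMeasure μ] {κ : ℝ} (hκ : 0 < κ) :
    BddAbove {r : ℝ | ∃ f : Y → ℝ, Measurable f ∧ (∀ x y, |f x - f y| ≤ dist x y) ∧
      r = partialDiam (μ.map f) (1 - κ)} := by
  obtain ⟨y₀⟩ := nonempty_of_prob μ
  rcases le_or_gt (1 - κ) 0 with h0 | h0
  · refine ⟨0, ?_⟩
    rintro r ⟨f, hf, hlip, rfl⟩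
    exact le_of_eq (partialDiam_eq_zero_of_nonpos _ h0)
  · -- find N with mass of ball y₀ N at least 1 - κ
    have hU : (⋃ n : ℕ, Metric.ball y₀ n) = Set.univ := Metric.iUnion_ball_nat y₀
    have hmono : Monotone (fun n : ℕ => Metric.ball y₀ n) := fun a b hab =>
      Metric.ball_subset_ball (by exact_mod_cast hab)
    have ht := tendsto_measure_iUnion_atTop (μ := μ) hmono
    rw [hU, measure_univ] at ht
    have hlt : ENNReal.ofReal (1 - κ) < 1 := ENNReal.ofReal_lt_one.2 (by linarith)
    obtain ⟨N, hN⟩ := (ht.eventually_const_lt hlt).exists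
    refine ⟨2 * N, ?_⟩
    rintro r ⟨f, hf, hlip, rfl⟩
    haveI : IsProbabilityMeasure (μ.map f) := Measure.isProbabilityMeasure_map hf.aemeasurable
    have hsub : Metric.ball y₀ N ⊆ f ⁻¹' (Set.Icc (f y₀ - N) (f y₀ + N)) := by
      intro x hx
      have := hlip x y₀
      have hd : dist x y₀ < N := Metric.mem_ball.1 hx
      have := abs_le.1 (le_trans (hlip x y₀) hd.le)
      simp only [Set.mem_preimage, Set.mem_Icc]
      constructor <;> linarith [this.1, this.2]
    have hmass : ENNReal.ofReal (1 - κ) ≤ (μ.map f) (Set.Icc (f y₀ - N) (f y₀ + N)) := by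
      rw [Measure.map_apply hf measurableSet_Icc]
      exact le_trans hN.le (measure_mono hsub)
    refine le_trans (partialDiam_le measurableSet_Icc (isBounded_Icc _ _) hmass) ?_
    rw [Real.diam_Icc (by linarith [Nat.cast_nonneg (α := ℝ) N] : f y₀ - N ≤ f y₀ + N)]
    ring_nf
    linarith

lemma obsDiam_nonneg (μ : Measure Y) [IsProbabilityMeasure μ] {κ : ℝ} (hκ : 0 < κ) :
    0 ≤ obsDiam dist μ κ :=
  le_csSup (obsSet_bddAbove μ hκ) (zero_mem_obsSet _ (fun x y => dist_nonneg) μ κ)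

lemma obsDiam_le_forall {d : X → X → ℝ} {μ : Measure X} [IsProbabilityMeasure μ]
    (hd : ∀ x y, 0 ≤ d x y) {κ : ℝ} {C : ℝ}
    (h : ∀ f : X → ℝ, Measurable f → (∀ x y, |f x - f y| ≤ d x y) →
      partialDiam (μ.map f) (1 - κ) ≤ C) : obsDiam d μ κ ≤ C := by
  refine csSup_le (obsSet_nonempty d hd μ κ) ?_
  rintro r ⟨f, hf, hlip, rfl⟩
  exact h f hf hlip

lemma le_obsDiam (μ : Measure Y) [IsProbabilityMeasure μ] {κ : ℝ} (hκ : 0 < κ)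
    {f : Y → ℝ} (hf : Measurable f) (hlip : ∀ x y, |f x - f y| ≤ dist x y) :
    partialDiam (μ.map f) (1 - κ) ≤ obsDiam dist μ κ :=
  le_csSup (obsSet_bddAbove μ hκ) ⟨f, hf, hlip, rfl⟩

lemma obsDiam_antitone (μ : Measure Y) [IsProbabilityMeasure μ] {κ κ' : ℝ}
    (hκ : 0 < κ) (hκ' : κ ≤ κ') : obsDiam dist μ κ' ≤ obsDiam dist μ κ := by
  refine obsDiam_le_forall (fun x y => dist_nonneg) ?_
  intro f hf hlip
  haveI : IsProbabilityMeasure (μ.map f) := Measure.isProbabilityMeasure_map hf.aemeasurable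
  refine le_trans (partialDiam_mono _ (by linarith) (by linarith)) (le_obsDiam μ hκ hf hlip)

end ObsAux2

namespace ObsAux3
open ObsAux ObsAux2

/-- Core left-continuity: for a probability measure on ℝ and `0 < α₀ ≤ 1`,
the partial diameter at some `α' < α₀` is at least `partialDiam ν α₀ - η`. -/
lemma exists_lt_partialDiam_ge (ν : Measure ℝ) [IsProbabilityMeasure ν]
    {α₀ η : ℝ} (h0 : 0 < α₀) (h1 : α₀ ≤ 1) (hη : 0 < η) :
    ∃ α', 0 < α' ∧ α' < α₀ ∧ partialDiam ν α₀ - η ≤ partialDiam ν α' := by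
  by_contra hcon
  push_neg at hcon
  set P := partialDiam ν α₀ with hP
  have key : ∀ α', 0 < α' → α' < α₀ → partialDiam ν α' < P - η := fun α' h h' =>
    hcon α' h h'
  have hc0 : 0 < P - η := lt_of_le_of_lt (partialDiam_nonneg ν (α₀/2))
      (key (α₀/2) (by linarith) (by linarith))
  set c := P - η with hc
  set αs : ℕ → ℝ := fun k => α₀ - (α₀/2) * (1/((k:ℝ)+1)) with hαs
  have hfrac : ∀ k : ℕ, 0 < 1/((k:ℝ)+1) ∧ 1/((k:ℝ)+1) ≤ 1 := by
    intro k
    constructor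
    · positivity
    · rw [div_le_one (by positivity)]; linarith [Nat.cast_nonneg (α := ℝ) k]
  have hαhalf : ∀ k, α₀ / 2 ≤ αs k := by
    intro k
    have h := hfrac k
    have : (α₀/2) * (1/((k:ℝ)+1)) ≤ (α₀/2) * 1 := by
      apply mul_le_mul_of_nonneg_left h.2 (by linarith)
    simp only [hαs]; nlinarith
  have hαpos : ∀ k, 0 < αs k := fun k => lt_of_lt_of_le (by linarith) (hαhalf k)
  have hαlt : ∀ k, αs k < α₀ := by
    intro k
    have h := hfrac k
    have : 0 < (α₀/2) * (1/((k:ℝ)+1)) := by positivity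
    simp only [hαs]; linarith
  have hαtend : Filter.Tendsto αs Filter.atTop (nhds α₀) := by
    have h2 : Filter.Tendsto (fun k : ℕ => (α₀/2) * (1/((k:ℝ)+1))) Filter.atTop
        (nhds ((α₀/2) * 0)) :=
      tendsto_const_nhds.mul tendsto_one_div_add_atTop_nhds_zero_nat
    rw [mul_zero] at h2
    have h3 := h2.const_sub α₀
    rw [sub_zero] at h3
    simpa [hαs, one_div] using h3
  -- For each k, an interval [a k, a k + c] with ν-mass ≥ αs k.
  have hIk : ∀ k : ℕ, ∃ a : ℝ, ENNReal.ofReal (αs k) ≤ ν (Set.Icc a (a + c)) := by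
    intro k
    have hlt : partialDiam ν (αs k) < c := key _ (hαpos k) (hαlt k)
    obtain ⟨r, ⟨A, hA, hAb, hm, rfl⟩, hr⟩ := exists_lt_of_csInf_lt
      (pd_set_nonempty ν (lt_of_lt_of_le (hαlt k) h1)) hlt
    have hAne : A.Nonempty := by
      rcases A.eq_empty_or_nonempty with h | h
      · exfalso
        rw [h] at hm
        simp only [measure_empty, nonpos_iff_eq_zero, ENNReal.ofReal_eq_zero] at hm
        exact absurd hm (by linarith [hαpos k])
      · exact h
    refine ⟨sInf A, le_trans hm (measure_mono ?_)⟩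
    intro x hx
    have hbd : BddBelow A := hAb.bddBelow
    refine ⟨csInf_le hbd hx, ?_⟩
    have hxd : ∀ y ∈ A, x - Metric.diam A ≤ y := by
      intro y hy
      have := Metric.dist_le_diam_of_mem hAb hx hy
      rw [Real.dist_eq] at this
      have := abs_le.1 this
      linarith [this.1, this.2]
    have : x - Metric.diam A ≤ sInf A := le_csInf hAne hxd
    linarith
  choose a ha using hIk
  -- a k lies in a compact interval
  obtain ⟨M, hM, hMν⟩ := exists_Icc_mass ν (by linarith : 1 - α₀/4 < 1)
  have haIcc : ∀ k, a k ∈ Set.Icc (-M - c) M := by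
    intro k
    by_contra hout
    have hdisj : Disjoint (Set.Icc (a k) (a k + c)) (Set.Icc (-M) M) := by
      rw [Set.disjoint_iff]
      rintro x ⟨⟨h1x, h2x⟩, h3x, h4x⟩
      exact hout ⟨by linarith, by linarith⟩
    have hsum := measure_union_le (μ := ν) (Set.Icc (a k) (a k + c)) (Set.Icc (-M) M)
    have hunion : ν (Set.Icc (a k) (a k + c) ∪ Set.Icc (-M) M) =
        ν (Set.Icc (a k) (a k + c)) + ν (Set.Icc (-M) M) :=
      measure_union hdisj measurableSet_Icc
    have hle1 : ν (Set.Icc (a k) (a k + c) ∪ Set.Icc (-M) M) ≤ 1 := prob_le_one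
    have hge : ENNReal.ofReal (αs k) + ENNReal.ofReal (1 - α₀/4) ≤
        ν (Set.Icc (a k) (a k + c)) + ν (Set.Icc (-M) M) := add_le_add (ha k) hMν
    rw [← ENNReal.ofReal_add (by linarith [hαpos k]) (by linarith)] at hge
    have h15 : (1:ℝ) + α₀/4 ≤ αs k + (1 - α₀/4) := by
      have := hαhalf k; linarith
    have : ENNReal.ofReal (1 + α₀/4) ≤ 1 := by
      calc ENNReal.ofReal (1 + α₀/4) ≤ ENNReal.ofReal (αs k + (1 - α₀/4)) :=
            ENNReal.ofReal_le_ofReal h15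
        _ ≤ ν (Set.Icc (a k) (a k + c)) + ν (Set.Icc (-M) M) := hge
        _ = ν (Set.Icc (a k) (a k + c) ∪ Set.Icc (-M) M) := hunion.symm
        _ ≤ 1 := hle1
    have : (1:ℝ) + α₀/4 ≤ 1 := by
      have h' := ENNReal.ofReal_le_one.1 this
      linarith [h']
    linarith
  -- Bolzano–Weierstrass
  obtain ⟨b, -, φs, hφs, hbtend⟩ := tendsto_subseq_of_bounded
    (isBounded_Icc (-M - c) M) haIcc
  -- For every δ > 0 the enlarged interval has mass ≥ α₀
  have hδ : ∀ δ : ℝ, 0 < δ → ENNReal.ofReal α₀ ≤ ν (Set.Icc (b - δ) (b + c + δ)) := by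
    intro δ hδ0
    have hev : ∀ᶠ j in Filter.atTop, |a (φs j) - b| < δ := by
      have := Metric.tendsto_atTop.1 hbtend δ hδ0
      obtain ⟨N, hN⟩ := this
      exact Filter.eventually_atTop.2 ⟨N, fun j hj => by
        have := hN j hj; rwa [Real.dist_eq] at this⟩
    have hsub : ∀ᶠ j in Filter.atTop,
        ENNReal.ofReal (αs (φs j)) ≤ ν (Set.Icc (b - δ) (b + c + δ)) := by
      refine hev.mono fun j hj => ?_
      have habs := abs_lt.1 hj
      refine le_trans (ha (φs j)) (measure_mono ?_)
      intro x ⟨hx1, hx2⟩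
      exact ⟨by linarith [habs.1, habs.2], by linarith [habs.1, habs.2]⟩
    have htend2 : Filter.Tendsto (fun j => ENNReal.ofReal (αs (φs j))) Filter.atTop
        (nhds (ENNReal.ofReal α₀)) := by
      have : Filter.Tendsto (fun j => αs (φs j)) Filter.atTop (nhds α₀) :=
        hαtend.comp hφs.tendsto_atTop
      exact (ENNReal.continuous_ofReal.tendsto α₀).comp this
    exact le_of_tendsto htend2 hsub
  -- shrink to the closed interval
  have hfinal : ENNReal.ofReal α₀ ≤ ν (Set.Icc b (b + c)) := by
    have hmeas : ∀ m : ℕ, NullMeasurableSet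
        (Set.Icc (b - 1/((m:ℝ)+1)) (b + c + 1/((m:ℝ)+1))) ν :=
      fun m => measurableSet_Icc.nullMeasurableSet
    have hanti : Antitone (fun m : ℕ => Set.Icc (b - 1/((m:ℝ)+1)) (b + c + 1/((m:ℝ)+1))) := by
      intro i j hij
      have hij' : (i:ℝ) ≤ (j:ℝ) := Nat.cast_le.mpr hij
      have : 1/((j:ℝ)+1) ≤ 1/((i:ℝ)+1) :=
        one_div_le_one_div_of_le (by positivity) (by linarith)
      exact Set.Icc_subset_Icc (by linarith) (by linarith)
    have hInter : (⋂ m : ℕ, Set.Icc (b - 1/((m:ℝ)+1)) (b + c + 1/((m:ℝ)+1))) =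
        Set.Icc b (b + c) := by
      ext x
      simp only [Set.mem_iInter, Set.mem_Icc]
      constructor
      · intro h
        constructor
        · by_contra hlt
          push_neg at hlt
          obtain ⟨m, hm⟩ := exists_nat_one_div_lt (by linarith : (0:ℝ) < b - x)
          linarith [(h m).1]
        · by_contra hlt
          push_neg at hlt
          obtain ⟨m, hm⟩ := exists_nat_one_div_lt (by linarith : (0:ℝ) < x - (b + c))
          linarith [(h m).2]
      · intro h m
        have : (0:ℝ) < 1/((m:ℝ)+1) := by positivity
        exact ⟨by linarith [h.1], by linarith [h.2]⟩
    have htendI := tendsto_measure_iInter_atTop (μ := ν) hmeas hanti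
      ⟨0, measure_ne_top ν _⟩
    rw [hInter] at htendI
    refine ge_of_tendsto htendI (Filter.Eventually.of_forall fun m => ?_)
    exact hδ (1/((m:ℝ)+1)) (by positivity)
  have hPc : partialDiam ν α₀ ≤ c := by
    have h := partialDiam_le measurableSet_Icc (isBounded_Icc b (b+c)) hfinal
    rwa [Real.diam_Icc (by linarith : b ≤ b + c), add_sub_cancel_left] at h
  rw [hc, ← hP] at hPc
  linarith

end ObsAux3

namespace ObsAux4
open ObsAux ObsAux2 ObsAux3

/-- The key comparison lemma: a box-distance witness at level ε yields
`ObsDiam(X; -(κ+ε)) ≤ ObsDiam(Y; -κ) + 2ε`. -/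
lemma comparison {X : Type*} [MeasurableSpace X] (dX : X → X → ℝ) (hdX : ∀ x y, 0 ≤ dX x y)
    {Y : Type*} [MetricSpace Y] [MeasurableSpace Y] [BorelSpace Y]
    (μX : Measure X) [IsProbabilityMeasure μX] (μY : Measure Y) [IsProbabilityMeasure μY]
    {κ ε : ℝ} (hκ : 0 < κ) (hε : 0 ≤ ε)
    (φ : ℝ → X) (ψ : ℝ → Y) (hφ : IsParameter φ μX) (hψ : IsParameter ψ μY)
    (I₀ : Set ℝ) (hI₀m : MeasurableSet I₀) (hI₀s : I₀ ⊆ Set.Ico (0:ℝ) 1)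
    (hI₀v : ENNReal.ofReal (1 - ε) ≤ volume I₀)
    (hbox : ∀ s ∈ I₀, ∀ t ∈ I₀, |dX (φ s) (φ t) - dist (ψ s) (ψ t)| ≤ ε) :
    obsDiam dX μX (κ + ε) ≤ obsDiam dist μY κ + 2 * ε := by
  rcases le_or_gt 1 ε with hε1 | hε1
  · -- trivial case ε ≥ 1
    have hLHS : obsDiam dX μX (κ+ε) ≤ 0 :=
      obsDiam_le_forall hdX (fun f hf hlip =>
        le_of_eq (partialDiam_eq_zero_of_nonpos _ (by linarith)))
    have hRHS : 0 ≤ obsDiam dist μY κ := obsDiam_nonneg μY hκ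
    linarith
  · have hI₀ne : I₀.Nonempty := by
      rcases I₀.eq_empty_or_nonempty with h | h
      · exfalso
        rw [h] at hI₀v
        simp only [measure_empty, nonpos_iff_eq_zero, ENNReal.ofReal_eq_zero] at hI₀v
        linarith
      · exact h
    obtain ⟨t₀, ht₀⟩ := hI₀ne
    apply obsDiam_le_forall hdX
    intro f hf hlip
    set S : Y → Set ℝ := fun y => (fun t => f (φ t) + dist y (ψ t)) '' I₀ with hS
    have hSne : ∀ y, (S y).Nonempty := fun y => ⟨_, Set.mem_image_of_mem _ ht₀⟩
    have hdXd : ∀ s ∈ I₀, ∀ t ∈ I₀, dX (φ s) (φ t) ≤ dist (ψ s) (ψ t) + ε := by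
      intro s hs t ht
      have := abs_le.1 (hbox s hs t ht)
      linarith [this.2]
    have hSbdd : ∀ y, BddBelow (S y) := by
      intro y
      refine ⟨f (φ t₀) - ε - dist y (ψ t₀), ?_⟩
      rintro v ⟨t, ht, rfl⟩
      have h1 := abs_le.1 (hlip (φ t) (φ t₀))
      have h2 := hdXd t ht t₀ ht₀
      have h4 := dist_triangle (ψ t) y (ψ t₀)
      have h5 : dist (ψ t) y = dist y (ψ t) := dist_comm _ _
      simp only []
      linarith [h1.1]
    set g : Y → ℝ := fun y => sInf (S y) with hg
    have hglip2 : ∀ y y', g y ≤ g y' + dist y y' := by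
      intro y y'
      have hle : g y - dist y y' ≤ sInf (S y') := by
        refine le_csInf (hSne y') ?_
        rintro v ⟨t, ht, rfl⟩
        have h1 : g y ≤ f (φ t) + dist y (ψ t) := csInf_le (hSbdd y) ⟨t, ht, rfl⟩
        have h4 := dist_triangle y y' (ψ t)
        simp only []
        linarith
      linarith [hle]
    have hglip : ∀ y y', |g y - g y'| ≤ dist y y' := by
      intro y y'
      rw [abs_le]
      constructor
      · have := hglip2 y' y
        rw [dist_comm] at this
        linarith
      · linarith [hglip2 y y']
    have hgmeas : Measurable g := by
      have hL : LipschitzWith 1 g := by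
        apply LipschitzWith.of_dist_le_mul
        intro y y'
        simp only [NNReal.coe_one, one_mul, Real.dist_eq]
        exact hglip y y'
      exact hL.continuous.measurable
    have hgub : ∀ s ∈ I₀, g (ψ s) ≤ f (φ s) := by
      intro s hs
      have hmem : f (φ s) ∈ S (ψ s) := ⟨s, hs, by simp⟩
      exact csInf_le (hSbdd _) hmem
    have hglb : ∀ s ∈ I₀, f (φ s) - ε ≤ g (ψ s) := by
      intro s hs
      refine le_csInf (hSne _) ?_
      rintro v ⟨t, ht, rfl⟩
      have h1 := abs_le.1 (hlip (φ s) (φ t))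
      have h2 := hdXd s hs t ht
      simp only []
      linarith [h1.2]
    haveI : IsProbabilityMeasure (μY.map g) := Measure.isProbabilityMeasure_map hgmeas.aemeasurable
    haveI : IsProbabilityMeasure (μX.map f) := Measure.isProbabilityMeasure_map hf.aemeasurable
    have hkey : partialDiam (μX.map f) (1 - (κ + ε)) ≤ partialDiam (μY.map g) (1 - κ) + 2*ε := by
      rw [← sub_le_iff_le_add]
      refine le_csInf (pd_set_nonempty _ (by linarith)) ?_
      rintro r ⟨A, hA, hAb, hm, rfl⟩
      rw [sub_le_iff_le_add]
      set B := Metric.cthickening ε A with hB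
      have hBm : MeasurableSet B := Metric.isClosed_cthickening.measurableSet
      have hBb : IsBounded B := hAb.cthickening
      have hmass : ENNReal.ofReal (1 - (κ + ε)) ≤ (μX.map f) B := by
        rw [Measure.map_apply hf hBm]
        have hXeq : μX (f ⁻¹' B) = volume ((φ ⁻¹' (f ⁻¹' B)) ∩ Set.Ico 0 1) := by
          rw [← hφ.2, Measure.map_apply hφ.1 (hf hBm), Measure.restrict_apply (hφ.1 (hf hBm))]
        have hYeq : μY (g ⁻¹' A) = volume ((ψ ⁻¹' (g ⁻¹' A)) ∩ Set.Ico 0 1) := by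
          rw [← hψ.2, Measure.map_apply hψ.1 (hgmeas hA),
            Measure.restrict_apply (hψ.1 (hgmeas hA))]
        set T := ψ ⁻¹' (g ⁻¹' A) with hT
        have hJ : T ∩ I₀ ⊆ (φ ⁻¹' (f ⁻¹' B)) ∩ Set.Ico 0 1 := by
          rintro s ⟨hsT, hsI⟩
          refine ⟨?_, hI₀s hsI⟩
          have h1 := hgub s hsI
          have h2 := hglb s hsI
          have hd : dist (f (φ s)) (g (ψ s)) ≤ ε := by
            rw [Real.dist_eq, abs_le]
            constructor <;> linarith
          exact Metric.mem_cthickening_of_dist_le _ _ _ _ hsT hd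
        have hcover : T ∩ Set.Ico (0:ℝ) 1 ⊆ (T ∩ I₀) ∪ (Set.Ico (0:ℝ) 1 \ I₀) := by
          rintro s ⟨h1, h2⟩
          by_cases h : s ∈ I₀
          · exact Or.inl ⟨h1, h⟩
          · exact Or.inr ⟨h2, h⟩
        have hcompl : volume (Set.Ico (0:ℝ) 1 \ I₀) ≤ ENNReal.ofReal ε := by
          have hdiff : volume (Set.Ico (0:ℝ) 1 \ I₀) =
              volume (Set.Ico (0:ℝ) 1) - volume I₀ :=
            measure_diff hI₀s hI₀m.nullMeasurableSet
              (ne_top_of_le_ne_top (by rw [Real.volume_Ico]; exact ENNReal.ofReal_ne_top)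
                (measure_mono hI₀s))
          have hv1 : volume (Set.Ico (0:ℝ) 1) = 1 := by
            rw [Real.volume_Ico]; norm_num
          rw [hdiff, hv1]
          have h2 : (1:ENNReal) - volume I₀ ≤ 1 - ENNReal.ofReal (1-ε) :=
            tsub_le_tsub_left hI₀v 1
          have h1e : (1:ENNReal) - ENNReal.ofReal (1-ε) = ENNReal.ofReal ε := by
            rw [← ENNReal.ofReal_one, ← ENNReal.ofReal_sub _ (by linarith : (0:ℝ) ≤ 1-ε)]
            norm_num
          rw [h1e] at h2
          exact h2
        have h6 : volume (T ∩ Set.Ico (0:ℝ) 1) ≤ volume (T ∩ I₀) + ENNReal.ofReal ε :=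
          le_trans (measure_mono hcover)
            (le_trans (measure_union_le _ _) (add_le_add_right hcompl _))
        have hm' : ENNReal.ofReal (1-κ) ≤ μY (g ⁻¹' A) := by
          rw [← Measure.map_apply hgmeas hA]; exact hm
        have h7 : ENNReal.ofReal (1-κ) ≤ volume (T ∩ Set.Ico (0:ℝ) 1) := hYeq ▸ hm' 
        have h8 : ENNReal.ofReal (1 - (κ + ε)) ≤ volume (T ∩ I₀) := by
          have heq : ENNReal.ofReal (1 - (κ + ε)) =
              ENNReal.ofReal (1-κ) - ENNReal.ofReal ε := by
            rw [← ENNReal.ofReal_sub _ hε]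
            ring_nf
          rw [heq]
          exact tsub_le_iff_right.2 (le_trans h7 h6)
        rw [hXeq]
        exact le_trans h8 (measure_mono hJ)
      exact (partialDiam_le hBm hBb hmass).trans (Metric.diam_cthickening_le A hε)
    refine hkey.trans (add_le_add_left ?_ _)
    exact le_obsDiam μY hκ hgmeas hglip

end ObsAux4

namespace ObsAux5
open ObsAux ObsAux2 ProbabilityTheory

/-- Quantile construction: every probability measure on ℝ is the pushforward of
Lebesgue measure on [0,1). -/
lemma exists_quantile (ν : Measure ℝ) [IsProbabilityMeasure ν] :
    ∃ Q : ℝ → ℝ, Measurable Q ∧ Measure.map Q (volume.restrict (Set.Ico (0:ℝ) 1)) = ν := by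
  classical
  set F : ℝ → ℝ := fun x => cdf ν x with hF
  have hFmono : Monotone F := monotone_cdf ν
  have hSne : ∀ u : ℝ, u < 1 → {x | u ≤ F x}.Nonempty := by
    intro u hu
    obtain ⟨x, hx⟩ := ((tendsto_cdf_atTop ν).eventually_const_lt hu).exists
    exact ⟨x, hx.le⟩
  have hSbdd : ∀ u : ℝ, 0 < u → BddBelow {x | u ≤ F x} := by
    intro u hu
    obtain ⟨x₀, hx₀⟩ := (Filter.eventually_atBot.1
      ((tendsto_cdf_atBot ν).eventually_lt_const hu))
    refine ⟨x₀, fun y hy => ?_⟩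
    by_contra hlt
    push_neg at hlt
    exact absurd hy (not_le.2 (hx₀ y hlt.le))
  have hiff : ∀ u : ℝ, 0 < u → u < 1 → ∀ x : ℝ, (sInf {z | u ≤ F z} ≤ x ↔ u ≤ F x) := by
    intro u hu0 hu1 x
    constructor
    · intro h
      have hstep : ∀ δ : ℝ, 0 < δ → u ≤ F (x + δ) := by
        intro δ hδ
        obtain ⟨y, hy, hylt⟩ := exists_lt_of_csInf_lt (hSne u hu1)
          (lt_of_le_of_lt h (by linarith) : sInf {z | u ≤ F z} < x + δ)
        exact le_trans hy (hFmono hylt.le)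
      have h1 : Filter.Tendsto (fun δ : ℝ => x + δ) (nhdsWithin 0 (Set.Ioi 0))
          (nhdsWithin x (Set.Ici x)) := by
        rw [tendsto_nhdsWithin_iff]
        constructor
        · have hc : Filter.Tendsto (fun δ : ℝ => x + δ) (nhds 0) (nhds x) := by
            have := ((continuous_const.add continuous_id :
              Continuous fun δ : ℝ => x + δ)).tendsto (0:ℝ)
            change Filter.Tendsto (fun δ : ℝ => x + δ) (nhds 0) (nhds (x + 0)) at this
            simpa only [add_zero] using this
          exact hc.mono_left nhdsWithin_le_nhds
        · exact Filter.eventually_of_mem self_mem_nhdsWithin fun δ hδ => by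
            simp only [Set.mem_Ici]
            linarith [Set.mem_Ioi.1 hδ]
      have h2 : Filter.Tendsto (fun δ : ℝ => F (x + δ)) (nhdsWithin 0 (Set.Ioi 0))
          (nhds (F x)) := ((cdf ν).right_continuous x).tendsto.comp h1
      exact ge_of_tendsto h2 (Filter.eventually_of_mem self_mem_nhdsWithin fun δ hδ =>
        hstep δ (Set.mem_Ioi.1 hδ))
    · intro h
      exact csInf_le (hSbdd u hu0) h
  set τ : ℝ → ℝ := fun t => if t ∈ Set.Ioo (0:ℝ) 1 then t else 1/2 with hτ
  set Q : ℝ → ℝ := fun t => sInf {x | τ t ≤ F x} with hQ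
  have hpre : ∀ x : ℝ, Q ⁻¹' (Set.Iic x) =
      if (1:ℝ)/2 ≤ F x then (Set.Ioo (0:ℝ) 1 ∩ Set.Iic (F x)) ∪ (Set.Ioo (0:ℝ) 1)ᶜ
      else Set.Ioo (0:ℝ) 1 ∩ Set.Iic (F x) := by
    intro x
    have hQt1 : ∀ t ∈ Set.Ioo (0:ℝ) 1, (Q t ≤ x ↔ t ≤ F x) := by
      intro t ht
      have hτt : τ t = t := if_pos ht
      rw [hQ]; simp only [hτt]
      exact hiff t ht.1 ht.2 x
    have hQt2 : ∀ t ∉ Set.Ioo (0:ℝ) 1, (Q t ≤ x ↔ (1:ℝ)/2 ≤ F x) := by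
      intro t ht
      have hτt : τ t = 1/2 := if_neg ht
      rw [hQ]; simp only [hτt]
      exact hiff (1/2) (by norm_num) (by norm_num) x
    split_ifs with hx
    · ext t
      simp only [Set.mem_preimage, Set.mem_Iic, Set.mem_union, Set.mem_inter_iff,
        Set.mem_compl_iff]
      constructor
      · intro h
        by_cases ht : t ∈ Set.Ioo (0:ℝ) 1
        · exact Or.inl ⟨ht, (hQt1 t ht).1 h⟩
        · exact Or.inr ht
      · rintro (⟨ht, hle⟩ | ht)
        · exact (hQt1 t ht).2 hle
        · exact (hQt2 t ht).2 hx
    · ext t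
      simp only [Set.mem_preimage, Set.mem_Iic, Set.mem_inter_iff]
      constructor
      · intro h
        by_cases ht : t ∈ Set.Ioo (0:ℝ) 1
        · exact ⟨ht, (hQt1 t ht).1 h⟩
        · exact absurd ((hQt2 t ht).1 h) hx
      · rintro ⟨ht, hle⟩
        exact (hQt1 t ht).2 hle
  have hQmeas : Measurable Q := by
    apply measurable_of_Iic
    intro x
    rw [hpre x]
    split_ifs with hx
    · exact ((measurableSet_Ioo.inter measurableSet_Iic).union
        measurableSet_Ioo.compl)
    · exact measurableSet_Ioo.inter measurableSet_Iic
  refine ⟨Q, hQmeas, ?_⟩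
  haveI : IsProbabilityMeasure (volume.restrict (Set.Ico (0:ℝ) 1)) := by
    constructor
    rw [Measure.restrict_apply MeasurableSet.univ, Set.univ_inter, Real.volume_Ico]
    norm_num
  haveI : IsProbabilityMeasure (Measure.map Q (volume.restrict (Set.Ico (0:ℝ) 1))) :=
    Measure.isProbabilityMeasure_map hQmeas.aemeasurable
  refine Measure.ext_of_Iic _ _ (fun x => ?_)
  rw [Measure.map_apply hQmeas measurableSet_Iic,
    Measure.restrict_apply (hQmeas measurableSet_Iic), hpre x]
  have hF0 : 0 ≤ F x := cdf_nonneg ν x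
  have hF1 : F x ≤ 1 := cdf_le_one ν x
  have hmain : volume ((Set.Ioo (0:ℝ) 1 ∩ Set.Iic (F x)) ∩ Set.Ico (0:ℝ) 1) =
      ENNReal.ofReal (F x) := by
    have hsub : Set.Ioo (0:ℝ) 1 ∩ Set.Iic (F x) ⊆ Set.Ico (0:ℝ) 1 := fun t ht =>
      ⟨ht.1.1.le, ht.1.2⟩
    rw [Set.inter_eq_left.2 hsub]
    rcases lt_or_ge (F x) 1 with h1 | h1
    · have : Set.Ioo (0:ℝ) 1 ∩ Set.Iic (F x) = Set.Ioc 0 (F x) := by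
        ext t
        simp only [Set.mem_inter_iff, Set.mem_Ioo, Set.mem_Iic, Set.mem_Ioc]
        constructor
        · rintro ⟨⟨h1t, h2t⟩, h3t⟩; exact ⟨h1t, h3t⟩
        · rintro ⟨h1t, h2t⟩; exact ⟨⟨h1t, lt_of_le_of_lt h2t h1⟩, h2t⟩
      rw [this, Real.volume_Ioc, sub_zero]
    · have hFx1 : F x = 1 := le_antisymm hF1 h1
      have : Set.Ioo (0:ℝ) 1 ∩ Set.Iic (F x) = Set.Ioo (0:ℝ) 1 := by
        rw [Set.inter_eq_left]
        exact fun t ht => by rw [hFx1]; exact ht.2.le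
      rw [this, Real.volume_Ioo, hFx1]
      norm_num
  split_ifs with hx
  · have hsplit : ((Set.Ioo (0:ℝ) 1 ∩ Set.Iic (F x)) ∪ (Set.Ioo (0:ℝ) 1)ᶜ) ∩
        Set.Ico (0:ℝ) 1 =
        ((Set.Ioo (0:ℝ) 1 ∩ Set.Iic (F x)) ∩ Set.Ico (0:ℝ) 1) ∪ {0} := by
      ext t
      simp only [Set.mem_inter_iff, Set.mem_union, Set.mem_inter_iff, Set.mem_compl_iff,
        Set.mem_Ioo, Set.mem_Iic, Set.mem_Ico, Set.mem_singleton_iff]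
      constructor
      · rintro ⟨h1 | h1, h2⟩
        · exact Or.inl ⟨h1, h2⟩
        · right
          rcases eq_or_lt_of_le h2.1 with h | h
          · exact h.symm
          · exact absurd ⟨h, h2.2⟩ h1
      · rintro (⟨h1, h2⟩ | h1)
        · exact ⟨Or.inl h1, h2⟩
        · subst h1
          exact ⟨Or.inr (fun hcon => lt_irrefl 0 hcon.1), le_refl 0, one_pos⟩
    rw [hsplit]
    have hz : volume ({(0:ℝ)} : Set ℝ) = 0 := Real.volume_singleton
    have := measure_union_le (μ := volume)
      ((Set.Ioo (0:ℝ) 1 ∩ Set.Iic (F x)) ∩ Set.Ico (0:ℝ) 1) ({0} : Set ℝ)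
    have hle : volume (((Set.Ioo (0:ℝ) 1 ∩ Set.Iic (F x)) ∩ Set.Ico (0:ℝ) 1) ∪ {0}) =
        volume ((Set.Ioo (0:ℝ) 1 ∩ Set.Iic (F x)) ∩ Set.Ico (0:ℝ) 1) := by
      refine le_antisymm (le_trans (measure_union_le _ _) ?_) (measure_mono Set.subset_union_left)
      rw [hz, add_zero]
    rw [hle, hmain, ofReal_cdf]
  · rw [hmain, ofReal_cdf]

end ObsAux5

namespace ObsAux6
open ObsAux ObsAux2 ObsAux5

/-- Every Borel probability measure on a complete separable metric space has a parameter. -/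
lemma exists_parameter {Z : Type*} [MetricSpace Z] [CompleteSpace Z]
    [TopologicalSpace.SeparableSpace Z] [MeasurableSpace Z] [BorelSpace Z]
    (μ : Measure Z) [IsProbabilityMeasure μ] : ∃ φ : ℝ → Z, IsParameter φ μ := by
  classical
  haveI hZ : Nonempty Z := nonempty_of_prob μ
  haveI : PolishSpace Z := inferInstance
  obtain ⟨ι, hι⟩ := MeasureTheory.exists_measurableEmbedding_real Z
  obtain ⟨x₀⟩ := hZ
  set g : ℝ → Z := fun y => if h : y ∈ Set.range ι then Set.rangeSplitting ι ⟨y, h⟩ else x₀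
    with hgdef
  have hgmeas : Measurable g :=
    Measurable.dite hι.measurable_rangeSplitting measurable_const hι.measurableSet_range
  have hgι : ∀ x : Z, g (ι x) = x := by
    intro x
    have h : ι x ∈ Set.range ι := ⟨x, rfl⟩
    simp only [hgdef, dif_pos h]
    exact Set.rightInverse_rangeSplitting hι.injective x
  haveI : IsProbabilityMeasure (μ.map ι) := Measure.isProbabilityMeasure_map hι.measurable.aemeasurable
  obtain ⟨Q, hQmeas, hQmap⟩ := exists_quantile (μ.map ι)
  refine ⟨g ∘ Q, hgmeas.comp hQmeas, ?_⟩
  rw [← Measure.map_map hgmeas hQmeas, hQmap, Measure.map_map hgmeas hι.measurable]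
  have hcomp : g ∘ ι = id := funext hgι
  rw [hcomp, Measure.map_id]

/-- Extraction of a box-distance witness at any level above the box distance. -/
lemma exists_box_witness {X Y : Type*} [MeasurableSpace X] [MeasurableSpace Y]
    (dX : X → X → ℝ) (dY : Y → Y → ℝ) (μX : Measure X) (μY : Measure Y)
    (hpX : ∃ φ : ℝ → X, IsParameter φ μX) (hpY : ∃ ψ : ℝ → Y, IsParameter ψ μY)
    {ε : ℝ} (h : boxDist dX dY μX μY < ε) :
    ∃ φ : ℝ → X, ∃ ψ : ℝ → Y, IsParameter φ μX ∧ IsParameter ψ μY ∧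
      ∃ I₀ : Set ℝ, MeasurableSet I₀ ∧ I₀ ⊆ Set.Ico (0:ℝ) 1 ∧
        ENNReal.ofReal (1 - ε) ≤ volume I₀ ∧
        ∀ s ∈ I₀, ∀ t ∈ I₀, |dX (φ s) (φ t) - dY (ψ s) (ψ t)| ≤ ε := by
  obtain ⟨φ₁, hφ₁⟩ := hpX
  obtain ⟨ψ₁, hψ₁⟩ := hpY
  have hSne : ({ε : ℝ | 0 ≤ ε ∧ ∃ φ : ℝ → X, ∃ ψ : ℝ → Y,
      IsParameter φ μX ∧ IsParameter ψ μY ∧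
      ∃ I₀ : Set ℝ, MeasurableSet I₀ ∧ I₀ ⊆ Set.Ico (0 : ℝ) 1 ∧
        ENNReal.ofReal (1 - ε) ≤ volume I₀ ∧
        ∀ s ∈ I₀, ∀ t ∈ I₀, |dX (φ s) (φ t) - dY (ψ s) (ψ t)| ≤ ε}).Nonempty := by
    refine ⟨1, le_refl 0 |>.trans zero_le_one, φ₁, ψ₁, hφ₁, hψ₁, ∅, MeasurableSet.empty,
      Set.empty_subset _, by simp, fun s hs => hs.elim⟩
  obtain ⟨ε', hmem, hlt⟩ := exists_lt_of_csInf_lt hSne h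
  obtain ⟨hε'0, φ, ψ, hφ, hψ, I₀, hI₀m, hI₀s, hI₀v, hbox⟩ := hmem
  refine ⟨φ, ψ, hφ, hψ, I₀, hI₀m, hI₀s, ?_, fun s hs t ht => (hbox s hs t ht).trans hlt.le⟩
  exact le_trans (ENNReal.ofReal_le_ofReal (by linarith)) hI₀v

end ObsAux6

open ObsAux ObsAux2 ObsAux3 ObsAux4 ObsAux5 ObsAux6


/-- **Theorem 2.11 (limit formula for the observable diameter).**
If mm-spaces `Xₙ` box-converge to `X`, then for every `κ > 0`,
`ObsDiam(X;-κ) = lim_{ε→0+} liminf_n ObsDiam(Xₙ;-(κ+ε))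
             = lim_{ε→0+} limsup_n ObsDiam(Xₙ;-(κ+ε))`. -/
theorem obsDiam_limit_formula
    {X : Type*} [MetricSpace X] [CompleteSpace X] [TopologicalSpace.SeparableSpace X]
    [MeasurableSpace X] [BorelSpace X]
    (μ : Measure X) [IsProbabilityMeasure μ]
    (Xn : ℕ → Type*) (iMet : ∀ n, MetricSpace (Xn n))
    (iMeas : ∀ n, MeasurableSpace (Xn n))
    (iComp : ∀ n, @CompleteSpace (Xn n) (iMet n).toPseudoMetricSpace.toUniformSpace)
    (iSep : ∀ n, @TopologicalSpace.SeparableSpace (Xn n)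
      (iMet n).toPseudoMetricSpace.toUniformSpace.toTopologicalSpace)
    (iBorel : ∀ n, @BorelSpace (Xn n)
      (iMet n).toPseudoMetricSpace.toUniformSpace.toTopologicalSpace (iMeas n))
    (μn : ∀ n, @Measure (Xn n) (iMeas n))
    (iProb : ∀ n, @IsProbabilityMeasure (Xn n) (iMeas n) (μn n))
    (hconv : Tendsto (fun n : ℕ =>
      @boxDist (Xn n) X (iMeas n) _ (@distFun (Xn n) (iMet n)) dist (μn n) μ)
      atTop (𝓝 0))
    (κ : ℝ) (hκ : 0 < κ) :
    Tendsto (fun ε : ℝ => liminf (fun n : ℕ =>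
        @obsDiam (Xn n) (iMeas n) (@distFun (Xn n) (iMet n)) (μn n) (κ + ε)) atTop)
      (𝓝[>] (0 : ℝ)) (𝓝 (obsDiam dist μ κ)) ∧
    Tendsto (fun ε : ℝ => limsup (fun n : ℕ =>
        @obsDiam (Xn n) (iMeas n) (@distFun (Xn n) (iMet n)) (μn n) (κ + ε)) atTop)
      (𝓝[>] (0 : ℝ)) (𝓝 (obsDiam dist μ κ)) := by
  classical
  set D : ℝ → ℝ := fun t => obsDiam dist μ t with hD
  set Dn : ℕ → ℝ → ℝ := fun n t =>
    @obsDiam (Xn n) (iMeas n) (@distFun (Xn n) (iMet n)) (μn n) t with hDn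
  have hXpar : ∃ φ : ℝ → X, IsParameter φ μ := exists_parameter μ
  -- the two-sided comparison bounds
  have hbounds : ∀ ε : ℝ, 0 < ε → ∀ᶠ n in atTop,
      Dn n (κ + ε) ≤ D κ + 2*ε ∧ D (κ + 2*ε) ≤ Dn n (κ + ε) + 2*ε := by
    intro ε hε
    have hev := hconv.eventually_lt_const hε
    refine hev.mono fun n hn => ?_
    letI := iMet n
    letI := iMeas n
    haveI := iComp n
    haveI := iSep n
    haveI := iBorel n
    haveI := iProb n
    have hpar_n : ∃ φ : ℝ → Xn n, IsParameter φ (μn n) := exists_parameter (μn n)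
    obtain ⟨φ, ψ, hφ, hψ, I₀, hI₀m, hI₀s, hI₀v, hbox⟩ :=
      exists_box_witness (@distFun (Xn n) (iMet n)) (dist (α := X)) (μn n) μ hpar_n hXpar hn
    constructor
    · exact comparison (@distFun (Xn n) (iMet n)) (fun x y => dist_nonneg) (μn n) μ
        hκ hε.le φ ψ hφ hψ I₀ hI₀m hI₀s hI₀v hbox
    · have hsw : ∀ s ∈ I₀, ∀ t ∈ I₀,
          |dist (ψ s) (ψ t) - dist (φ s) (φ t)| ≤ ε := by
        intro s hs t ht
        rw [abs_sub_comm]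
        exact hbox s hs t ht
      have hc := comparison (dist (α := X)) (fun x y => dist_nonneg) μ (μn n)
        (by linarith : 0 < κ + ε) hε.le ψ φ hψ hφ I₀ hI₀m hI₀s hI₀v hsw
      have heq : κ + ε + ε = κ + 2*ε := by ring
      rw [heq] at hc
      exact hc
  -- right-continuity of D at κ
  have hrc : ∀ a, a < D κ → ∃ δ > 0, ∀ t, κ < t → t < κ + δ → a < D t := by
    intro a ha
    obtain ⟨r, hrmem, har⟩ := exists_lt_of_lt_csSup
      (obsSet_nonempty dist (fun _ _ => dist_nonneg) μ κ) ha
    obtain ⟨f, hf, hlip, rfl⟩ := hrmem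
    haveI : IsProbabilityMeasure (μ.map f) := Measure.isProbabilityMeasure_map hf.aemeasurable
    rcases le_or_gt (1 - κ) 0 with h0 | h0
    · have hz : partialDiam (μ.map f) (1-κ) = 0 := partialDiam_eq_zero_of_nonpos _ h0
      refine ⟨1, one_pos, fun t ht _ => ?_⟩
      have ha0 : a < 0 := by rw [hz] at har; exact har
      exact lt_of_lt_of_le ha0 (obsDiam_nonneg μ (lt_trans hκ ht))
    · set P := partialDiam (μ.map f) (1-κ) with hP
      have hη : 0 < (P - a)/2 := by
        have : a < P := har
        linarith
      obtain ⟨α', hα'0, hα'lt, hα'ge⟩ := exists_lt_partialDiam_ge (μ.map f)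
        h0 (by linarith) hη
      refine ⟨(1-κ) - α', by linarith, fun t ht1 ht2 => ?_⟩
      have h1t : α' ≤ 1 - t := by linarith
      have h1t' : 1 - t < 1 := by linarith
      have hmono := partialDiam_mono (μ.map f) h1t h1t'
      have hDt : partialDiam (μ.map f) (1-t) ≤ D t :=
        le_obsDiam μ (lt_trans hκ ht1) hf hlip
      have : a < P := har
      linarith
  have hDanti : ∀ t, κ ≤ t → D t ≤ D κ := fun t ht => obsDiam_antitone μ hκ ht
  have h2ε : Tendsto (fun ε : ℝ => 2*ε) (𝓝[>] (0:ℝ)) (𝓝 0) := by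
    have : Tendsto (fun ε : ℝ => 2*ε) (𝓝 (0:ℝ)) (𝓝 (2*0)) :=
      (continuous_const.mul continuous_id).tendsto 0
    rw [mul_zero] at this
    exact this.mono_left nhdsWithin_le_nhds
  have hg0 : Tendsto (fun ε : ℝ => D (κ + 2*ε)) (𝓝[>] (0:ℝ)) (𝓝 (D κ)) := by
    rw [tendsto_order]
    constructor
    · intro a ha
      obtain ⟨δ, hδ0, hδ⟩ := hrc a ha
      have hmem : Set.Ioo (0:ℝ) (δ/2) ∈ 𝓝[>] (0:ℝ) :=
        Ioo_mem_nhdsGT_of_mem ⟨le_refl 0, by linarith⟩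
      exact Filter.eventually_of_mem hmem fun ε hε =>
        hδ _ (by linarith [hε.1]) (by linarith [hε.2])
    · intro b hb
      exact Filter.eventually_of_mem self_mem_nhdsWithin fun ε hε =>
        lt_of_le_of_lt (hDanti _ (by linarith [Set.mem_Ioi.1 hε])) hb
  have hg : Tendsto (fun ε : ℝ => D (κ + 2*ε) - 2*ε) (𝓝[>] (0:ℝ)) (𝓝 (D κ)) := by
    have := hg0.sub h2ε
    simpa using this
  have hh : Tendsto (fun ε : ℝ => D κ + 2*ε) (𝓝[>] (0:ℝ)) (𝓝 (D κ)) := by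
    have := (tendsto_const_nhds (x := D κ) (f := 𝓝[>] (0:ℝ))).add h2ε
    simpa using this
  -- bounds on liminf and limsup for each ε > 0
  have hLbnd : ∀ ε : ℝ, 0 < ε →
      D (κ + 2*ε) - 2*ε ≤ liminf (fun n => Dn n (κ + ε)) atTop ∧
      liminf (fun n => Dn n (κ + ε)) atTop ≤ D κ + 2*ε ∧
      D (κ + 2*ε) - 2*ε ≤ limsup (fun n => Dn n (κ + ε)) atTop ∧
      limsup (fun n => Dn n (κ + ε)) atTop ≤ D κ + 2*ε := by
    intro ε hε
    have hev := hbounds ε hε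
    have hup : ∀ᶠ n in atTop, Dn n (κ + ε) ≤ D κ + 2*ε := hev.mono fun n h => h.1
    have hlo : ∀ᶠ n in atTop, D (κ + 2*ε) - 2*ε ≤ Dn n (κ + ε) := hev.mono fun n h => by
      linarith [h.2]
    have hbu : Filter.IsBoundedUnder (· ≤ ·) atTop (fun n => Dn n (κ + ε)) :=
      ⟨D κ + 2*ε, by simpa [Filter.eventually_map] using hup⟩
    have hbl : Filter.IsBoundedUnder (· ≥ ·) atTop (fun n => Dn n (κ + ε)) :=
      ⟨D (κ + 2*ε) - 2*ε, by simpa [Filter.eventually_map] using hlo⟩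
    refine ⟨?_, ?_, ?_, ?_⟩
    · exact Filter.le_liminf_of_le hbu.isCoboundedUnder_ge hlo
    · exact le_trans (Filter.liminf_le_limsup hbu hbl)
        (Filter.limsup_le_of_le hbl.isCoboundedUnder_le hup)
    · exact le_trans (Filter.le_liminf_of_le hbu.isCoboundedUnder_ge hlo)
        (Filter.liminf_le_limsup hbu hbl)
    · exact Filter.limsup_le_of_le hbl.isCoboundedUnder_le hup
  constructor
  · refine tendsto_of_tendsto_of_tendsto_of_le_of_le' hg hh ?_ ?_
    · exact Filter.eventually_of_mem self_mem_nhdsWithin fun ε hε =>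
        (hLbnd ε (Set.mem_Ioi.1 hε)).1
    · exact Filter.eventually_of_mem self_mem_nhdsWithin fun ε hε =>
        (hLbnd ε (Set.mem_Ioi.1 hε)).2.1
  · refine tendsto_of_tendsto_of_tendsto_of_le_of_le' hg hh ?_ ?_
    · exact Filter.eventually_of_mem self_mem_nhdsWithin fun ε hε =>
        (hLbnd ε (Set.mem_Ioi.1 hε)).2.2.1
    · exact Filter.eventually_of_mem self_mem_nhdsWithin fun ε hε =>
        (hLbnd ε (Set.mem_Ioi.1 hε)).2.2.2
end
end

section
/- Let X be a k-regular mm-space for some natural number k ≥ 1. Then for any 0 < κ < 1, any 1 ≤ p < +∞ and any natural number n ≥ 1, ObsDiam(X_p^n; -κ) ≤ n^{1/(2p) - 1/2} · ObsDiam(X_1^n; -κ) + 4 n^{1/(2p)}. -/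
open MeasureTheory Filter Topology Bornology
open scoped ENNReal

noncomputable section

lemma partialDiam_nonneg (ν : Measure ℝ) (α : ℝ) : 0 ≤ partialDiam ν α :=
  Real.sInf_nonneg fun _ ⟨_, _, _, _, hr⟩ => hr ▸ Metric.diam_nonneg

lemma partialDiam_le (ν : Measure ℝ) (α : ℝ) {A : Set ℝ} (h1 : MeasurableSet A)
    (h2 : IsBounded A) (h3 : ENNReal.ofReal α ≤ ν A) :
    partialDiam ν α ≤ Metric.diam A :=
  csInf_le ⟨0, fun _ ⟨_, _, _, _, hr⟩ => hr ▸ Metric.diam_nonneg⟩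
    ⟨A, h1, h2, h3, rfl⟩

lemma sSup_sub_sInf_le_diam {A : Set ℝ} (hne : A.Nonempty) (hb : IsBounded A) :
    sSup A - sInf A ≤ Metric.diam A := by
  have h1 : sSup A ∈ closure A := csSup_mem_closure hne hb.bddAbove
  have h2 : sInf A ∈ closure A := csInf_mem_closure hne hb.bddBelow
  calc sSup A - sInf A ≤ |sSup A - sInf A| := le_abs_self _
    _ = dist (sSup A) (sInf A) := (Real.dist_eq _ _).symm
    _ ≤ Metric.diam (closure A) := Metric.dist_le_diam_of_mem hb.closure h1 h2
    _ = Metric.diam A := Metric.diam_closure A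

/-- **Lemma 3.2.** If `X` is a `k`-regular mm-space (a `k`-point space, all nonzero
distances `1`, with uniform measure), then for `0 < κ < 1`, `1 ≤ p < ∞` and `n ≥ 1`,
`ObsDiam(X_p^n;-κ) ≤ n^(1/(2p)-1/2) ObsDiam(X_1^n;-κ) + 4 n^(1/(2p))`. -/
theorem obsDiam_lp_le_of_k_regular
    {X : Type*} [MetricSpace X] [Fintype X] [MeasurableSpace X] [BorelSpace X]
    (k : ℕ) (hk : 1 ≤ k) (hcard : Fintype.card X = k)
    (hdist : ∀ x y : X, x ≠ y → dist x y = 1)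
    (μ : Measure X) (hμ : μ = (k : ℝ≥0∞)⁻¹ • ∑ x : X, Measure.dirac x)
    (κ : ℝ) (hκ0 : 0 < κ) (hκ1 : κ < 1)
    (p : ℝ) (hp : 1 ≤ p) (n : ℕ) (hn : 1 ≤ n) :
    obsDiam (lpDist dist p) (Measure.pi fun _ : Fin n => μ) κ ≤
      (n : ℝ) ^ (1 / (2 * p) - 1 / 2) *
        obsDiam (fun x y : Fin n → X => ∑ i, dist (x i) (y i))
          (Measure.pi fun _ : Fin n => μ) κ +
      4 * (n : ℝ) ^ (1 / (2 * p)) := by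
  set N : ℝ := (n : ℝ) with hNdef
  have hN1 : (1:ℝ) ≤ N := by rw [hNdef]; exact_mod_cast hn
  have hN0 : (0:ℝ) < N := lt_of_lt_of_le one_pos hN1
  have hp0 : (0:ℝ) < p := lt_of_lt_of_le one_pos hp
  have hκ' : (0:ℝ) < 1 - κ := by linarith
  haveI hXne : Nonempty X := Fintype.card_pos_iff.mp (by omega)
  -- measurability infrastructure
  have hsing : ∀ x : X, MeasurableSet ({x} : Set X) := by
    intro x
    have h : ({x} : Set X) = Metric.ball x 1 := by
      ext y
      simp only [Set.mem_singleton_iff, Metric.mem_ball]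
      constructor
      · rintro rfl; simpa using one_pos
      · intro h; by_contra hne; rw [hdist y x hne] at h; exact lt_irrefl _ h
    rw [h]; exact Metric.isOpen_ball.measurableSet
  haveI : MeasurableSingletonClass X := ⟨hsing⟩
  haveI : MeasurableSingletonClass (Fin n → X) := by
    constructor
    intro y
    have h : ({y} : Set (Fin n → X)) = ⋂ i, (fun z : Fin n → X => z i) ⁻¹' {y i} := by
      ext z; simp [funext_iff]
    rw [h]
    exact MeasurableSet.iInter fun i => (measurable_pi_apply i) (hsing (y i))
  haveI : IsProbabilityMeasure μ := by
    constructor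
    rw [hμ]
    simp only [Measure.smul_apply, smul_eq_mul, Measure.finset_sum_apply,
      Measure.dirac_apply_of_mem (Set.mem_univ _), Finset.sum_const, Finset.card_univ,
      hcard, nsmul_eq_mul, mul_one]
    exact ENNReal.inv_mul_cancel (by exact_mod_cast (by omega : k ≠ 0))
      (ENNReal.natCast_ne_top k)
  set ν : Measure (Fin n → X) := Measure.pi fun _ : Fin n => μ with hνdef
  haveI : IsProbabilityMeasure ν := by rw [hνdef]; infer_instance
  set d1 : (Fin n → X) → (Fin n → X) → ℝ := fun x y => ∑ i, dist (x i) (y i) with hd1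
  have hd1_nonneg : ∀ x y, 0 ≤ d1 x y := fun x y => Finset.sum_nonneg fun i _ => dist_nonneg
  have hd1_le : ∀ x y, d1 x y ≤ N := by
    intro x y
    calc d1 x y ≤ ∑ _i : Fin n, (1:ℝ) := by
          apply Finset.sum_le_sum
          intro i _
          rcases eq_or_ne (x i) (y i) with h|h
          · simp [h]
          · exact (hdist _ _ h).le
      _ = N := by simp [hNdef]
  have hd1_tri : ∀ x y z, d1 x z ≤ d1 x y + d1 y z := by
    intro x y z
    rw [hd1, ← Finset.sum_add_distrib]
    exact Finset.sum_le_sum fun i _ => dist_triangle _ _ _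
  have hd1_symm : ∀ x y, d1 x y = d1 y x := by
    intro x y; simp [hd1, dist_comm]
  have hd1_self : ∀ x, d1 x x = 0 := by intro x; simp [hd1]
  have hlp : ∀ x y : Fin n → X, lpDist dist p x y = (d1 x y) ^ (1/p) := by
    intro x y
    unfold lpDist
    congr 1
    apply Finset.sum_congr rfl
    intro i _
    rcases eq_or_ne (x i) (y i) with h|h
    · simp [h, Real.zero_rpow (ne_of_gt hp0)]
    · rw [hdist _ _ h, Real.one_rpow]
  -- constants
  set c : ℝ := N ^ ((1:ℝ)/2 - 1/(2*p)) with hc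
  have hc0 : 0 < c := Real.rpow_pos_of_pos hN0 _
  set s : ℝ := N ^ ((1:ℝ)/2) with hs
  have hs0 : 0 < s := Real.rpow_pos_of_pos hN0 _
  have hkey : ∀ m : ℝ, 0 ≤ m → c * m ^ (1/p) ≤ m + s := by
    intro m hm
    rcases le_total m s with h|h
    · have h1 : m ^ (1/p) ≤ s ^ (1/p) := Real.rpow_le_rpow hm h (by positivity)
      have h2 : c * s ^ (1/p) = s := by
        rw [hs, hc, ← Real.rpow_mul hN0.le, ← Real.rpow_add hN0]
        congr 1
        field_simp
        ring
      calc c * m ^ (1/p) ≤ c * s ^ (1/p) := by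
            exact mul_le_mul_of_nonneg_left h1 hc0.le
        _ = s := h2
        _ ≤ m + s := by linarith
    · have hm0 : 0 < m := lt_of_lt_of_le hs0 h
      have hq : c = s ^ (1 - 1/p) := by
        rw [hs, hc, ← Real.rpow_mul hN0.le]
        congr 1
        field_simp
      have hexp : (0:ℝ) ≤ 1 - 1/p := by
        have : 1/p ≤ 1 := by rw [div_le_one hp0]; exact hp
        linarith
      have h1 : s ^ (1 - 1/p) ≤ m ^ (1 - 1/p) := Real.rpow_le_rpow hs0.le h hexp
      have h2 : m ^ (1 - 1/p) * m ^ (1/p) = m := by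
        rw [← Real.rpow_add hm0]
        simp
      calc c * m ^ (1/p) ≤ m ^ (1 - 1/p) * m ^ (1/p) :=
            mul_le_mul_of_nonneg_right (hq ▸ h1) (Real.rpow_nonneg hm _)
        _ = m := h2
        _ ≤ m + s := by linarith
  -- boundedness of the l1 observable-diameter set, and nonemptiness facts
  set l1Set : Set ℝ := {r : ℝ | ∃ f : (Fin n → X) → ℝ, Measurable f ∧
      (∀ x y, |f x - f y| ≤ d1 x y) ∧ r = partialDiam (ν.map f) (1 - κ)} with hl1Set
  have hobs1 : obsDiam d1 ν κ = sSup l1Set := rfl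
  have hIcc : ∀ (h : (Fin n → X) → ℝ), Measurable h → (∀ x y, |h x - h y| ≤ d1 x y) →
      ∀ x₀ : Fin n → X, ENNReal.ofReal (1 - κ) ≤ (ν.map h) (Set.Icc (h x₀ - N) (h x₀ + N)) := by
    intro h hm hl x₀
    have hsub : h ⁻¹' (Set.Icc (h x₀ - N) (h x₀ + N)) = Set.univ := by
      ext x
      simp only [Set.mem_preimage, Set.mem_Icc, Set.mem_univ, iff_true]
      have h1 := hl x x₀
      have h2 := hd1_le x x₀
      have h3 := abs_le.mp (h1.trans h2)
      constructor <;> linarith [h3.1, h3.2]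
    rw [Measure.map_apply hm measurableSet_Icc, hsub, measure_univ]
    exact ENNReal.ofReal_le_one.mpr (by linarith)
  obtain ⟨x₀⟩ : Nonempty (Fin n → X) := inferInstance
  have hbdd : BddAbove l1Set := by
    refine ⟨2 * N, ?_⟩
    rintro r ⟨h, hm, hl, rfl⟩
    calc partialDiam (ν.map h) (1 - κ)
        ≤ Metric.diam (Set.Icc (h x₀ - N) (h x₀ + N)) :=
          partialDiam_le _ _ measurableSet_Icc (Metric.isBounded_Icc _ _) (hIcc h hm hl x₀)
      _ = 2 * N := by rw [Real.diam_Icc (by linarith)]; ring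
  -- main estimate for each f
  rw [show obsDiam (lpDist dist p) ν κ = sSup {r : ℝ | ∃ f : (Fin n → X) → ℝ,
      Measurable f ∧ (∀ x y, |f x - f y| ≤ lpDist dist p x y) ∧
      r = partialDiam (ν.map f) (1 - κ)} from rfl]
  apply Real.sSup_le
  · rintro r ⟨f, hfm, hfl, rfl⟩
    -- the 1-Lipschitz (for d1) function g
    have hflip : ∀ x y, c * |f x - f y| ≤ d1 x y + s := by
      intro x y
      calc c * |f x - f y| ≤ c * (d1 x y) ^ (1/p) := by
            apply mul_le_mul_of_nonneg_left _ hc0.le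
            rw [← hlp]; exact hfl x y
        _ ≤ d1 x y + s := hkey _ (hd1_nonneg x y)
    have hune : (Finset.univ : Finset (Fin n → X)).Nonempty := Finset.univ_nonempty
    set g : (Fin n → X) → ℝ := fun x => Finset.univ.inf' hune (fun y => c * f y + d1 x y)
      with hg
    have hgm : Measurable g := measurable_of_countable g
    have hg_le : ∀ x, g x ≤ c * f x := by
      intro x
      have h := Finset.inf'_le (s := (Finset.univ : Finset (Fin n → X)))
        (fun y => c * f y + d1 x y) (Finset.mem_univ x)
      rw [hg]
      simp only [hd1_self x, add_zero] at h
      exact h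
    have hg_ge : ∀ x, c * f x - s ≤ g x := by
      intro x
      apply Finset.le_inf'
      intro y _
      have h1 : c * (f x - f y) ≤ c * |f x - f y| :=
        mul_le_mul_of_nonneg_left (le_abs_self _) hc0.le
      have h2 := hflip x y
      have h3 := mul_sub c (f x) (f y)
      linarith
    have hg_lip : ∀ x y, |g x - g y| ≤ d1 x y := by
      have key : ∀ x y, g x ≤ g y + d1 x y := by
        intro x y
        obtain ⟨z, _, hz⟩ := Finset.exists_mem_eq_inf' hune (fun w => c * f w + d1 y w)
        have h1 : g x ≤ c * f z + d1 x z :=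
          Finset.inf'_le (fun w => c * f w + d1 x w) (Finset.mem_univ z)
        have h2 : d1 x z ≤ d1 x y + d1 y z := hd1_tri x y z
        have h3 : g y = c * f z + d1 y z := hz
        linarith
      intro x y
      rw [abs_sub_le_iff]
      refine ⟨by linarith [key x y], ?_⟩
      have h := key y x
      rw [hd1_symm y x] at h
      linarith
    have hgmem : partialDiam (ν.map g) (1 - κ) ∈ l1Set := ⟨g, hgm, hg_lip, rfl⟩
    have hDg_le : partialDiam (ν.map g) (1 - κ) ≤ sSup l1Set := le_csSup hbdd hgmem
    -- nonemptiness of the partial-diameter set for g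
    set gSet : Set ℝ := {r : ℝ | ∃ A : Set ℝ, MeasurableSet A ∧ IsBounded A ∧
        ENNReal.ofReal (1 - κ) ≤ (ν.map g) A ∧ r = Metric.diam A} with hgSet
    have hgSet_ne : gSet.Nonempty :=
      ⟨Metric.diam (Set.Icc (g x₀ - N) (g x₀ + N)),
        Set.Icc (g x₀ - N) (g x₀ + N), measurableSet_Icc, (Metric.isBounded_Icc _ _),
        hIcc g hgm hg_lip x₀, rfl⟩
    -- Step 5: compare partial diameters of f and g
    have hstep5 : partialDiam (ν.map f) (1 - κ) ≤
        c⁻¹ * (partialDiam (ν.map g) (1 - κ) + s) := by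
      have hmain : c * partialDiam (ν.map f) (1 - κ) - s ≤ sInf gSet := by
        apply le_csInf hgSet_ne
        rintro r ⟨A, hAm, hAb, hAμ, rfl⟩
        have hAne : A.Nonempty := by
          by_contra hA
          rw [Set.not_nonempty_iff_eq_empty] at hA
          rw [hA, measure_empty] at hAμ
          exact absurd hAμ (not_le.mpr (ENNReal.ofReal_pos.mpr hκ'))
        have hab : sSup A - sInf A ≤ Metric.diam A := sSup_sub_sInf_le_diam hAne hAb
        set a : ℝ := sInf A
        set b : ℝ := sSup A
        have hsub : g ⁻¹' A ⊆ f ⁻¹' (Set.Icc (c⁻¹ * a) (c⁻¹ * (b + s))) := by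
          intro x hx
          simp only [Set.mem_preimage, Set.mem_Icc] at hx ⊢
          have h1 : a ≤ g x := csInf_le hAb.bddBelow hx
          have h2 : g x ≤ b := le_csSup hAb.bddAbove hx
          have h3 := hg_le x
          have h4 := hg_ge x
          constructor
          · rw [inv_mul_le_iff₀ hc0]; linarith
          · rw [le_inv_mul_iff₀ hc0]; linarith
        have hmeas : ENNReal.ofReal (1 - κ) ≤
            (ν.map f) (Set.Icc (c⁻¹ * a) (c⁻¹ * (b + s))) := by
          rw [Measure.map_apply hfm measurableSet_Icc]
          rw [Measure.map_apply hgm hAm] at hAμ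
          exact hAμ.trans (measure_mono hsub)
        have hd : partialDiam (ν.map f) (1 - κ) ≤ c⁻¹ * (Metric.diam A + s) := by
          have hableq : a ≤ b := by
            obtain ⟨w, hw⟩ := hAne
            exact (csInf_le hAb.bddBelow hw).trans (le_csSup hAb.bddAbove hw)
          calc partialDiam (ν.map f) (1 - κ)
              ≤ Metric.diam (Set.Icc (c⁻¹ * a) (c⁻¹ * (b + s))) :=
                partialDiam_le _ _ measurableSet_Icc (Metric.isBounded_Icc _ _) hmeas
            _ = c⁻¹ * (b + s) - c⁻¹ * a := by
                rw [Real.diam_Icc]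
                apply mul_le_mul_of_nonneg_left (by linarith) (inv_nonneg.mpr hc0.le)
            _ = c⁻¹ * (b - a + s) := by ring
            _ ≤ c⁻¹ * (Metric.diam A + s) := by
                apply mul_le_mul_of_nonneg_left (by linarith) (inv_nonneg.mpr hc0.le)
        rw [le_inv_mul_iff₀ hc0] at hd
        linarith
      have hrfl : partialDiam (ν.map g) (1 - κ) = sInf gSet := rfl
      rw [hrfl, le_inv_mul_iff₀ hc0]
      linarith
    -- constants arithmetic
    have hcinv : c⁻¹ = N ^ ((1:ℝ)/(2*p) - 1/2) := by
      rw [hc, ← Real.rpow_neg hN0.le]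
      congr 1
      ring
    have hcs : c⁻¹ * s = N ^ ((1:ℝ)/(2*p)) := by
      rw [hcinv, hs, ← Real.rpow_add hN0]
      congr 1
      ring
    have hrpow_nonneg : (0:ℝ) ≤ N ^ ((1:ℝ)/(2*p)) := Real.rpow_nonneg hN0.le _
    calc partialDiam (ν.map f) (1 - κ)
        ≤ c⁻¹ * (partialDiam (ν.map g) (1 - κ) + s) := hstep5
      _ = c⁻¹ * partialDiam (ν.map g) (1 - κ) + c⁻¹ * s := by ring
      _ ≤ c⁻¹ * sSup l1Set + c⁻¹ * s := by
          have := mul_le_mul_of_nonneg_left hDg_le (inv_nonneg.mpr hc0.le)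
          linarith
      _ ≤ N ^ ((1:ℝ)/(2*p) - 1/2) * obsDiam d1 ν κ + 4 * N ^ ((1:ℝ)/(2*p)) := by
          rw [hcinv, hcs] at *
          rw [hobs1]
          linarith
      _ = N ^ (1 / (2 * p) - 1 / 2) * obsDiam d1 ν κ + 4 * N ^ (1 / (2 * p)) := by norm_num
  · have hobs_nonneg : 0 ≤ obsDiam d1 ν κ := by
      rw [hobs1]
      exact Real.sSup_nonneg fun r ⟨h, _, _, hr⟩ => hr ▸ partialDiam_nonneg _ _
    have h1 : (0:ℝ) ≤ N ^ (1 / (2 * p) - 1 / 2) := Real.rpow_nonneg hN0.le _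
    have h2 : (0:ℝ) ≤ N ^ (1 / (2 * p)) := Real.rpow_nonneg hN0.le _
    positivity
end
end
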